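/- arXiv:1505.03199 — 7 statements merged into one kernel-verified Lean document; each statement's English description precedes it below -/
import Mathlib

section
/- If X is a mean zero random variable with finite nonzero variance σ², and X^□ has the X-square bias distribution (defined by E[f(X^□)] = E[X² f(X)]/E[X²]) and U is uniform on [0,1] independent of X^□, then U·X^□ has the X-zero bias distribution, i.e., σ² E[g(U X^□)] = E[X F(X)] for all continuous compactly supported g, where F(x) = ∫₀ˣ g(u) du. -/
open MeasureTheory ProbabilityTheory Real

/-- If `X` has mean zero and finite nonzero variance `σ2`, `Xbox` has the `X`-square bias
distribution, and `U` is uniform on `[0,1]` independent of `Xbox`, then `U * Xbox` has the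
`X`-zero bias distribution, in the sense that
`σ2 * E[g (U * Xbox)] = E[X * F X]` with `F x = ∫ u in 0..x, g u`, for all continuous
compactly supported `g`. -/
theorem square_bias_uniform_is_zero_bias
    {Ω : Type*} [MeasurableSpace Ω] (μ : Measure Ω) [IsProbabilityMeasure μ]
    (X Xbox U : Ω → ℝ) (σ2 : ℝ)
    (hXm : Measurable X) (hXboxm : Measurable Xbox) (hUm : Measurable U)
    (hmean : ∫ ω, X ω ∂μ = 0)
    (hL2 : Integrable (fun ω => (X ω) ^ 2) μ)
    (hvar : ∫ ω, (X ω) ^ 2 ∂μ = σ2) (hσ2 : 0 < σ2)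
    (hsq : ∀ f : ℝ → ℝ, Measurable f →
      Integrable (fun ω => (X ω) ^ 2 * f (X ω)) μ →
      Integrable (fun ω => f (Xbox ω)) μ →
      ∫ ω, f (Xbox ω) ∂μ = (∫ ω, (X ω) ^ 2 * f (X ω) ∂μ) / σ2)
    (hU : μ.map U = volume.restrict (Set.Icc (0 : ℝ) 1))
    (hindep : IndepFun U Xbox μ) :
    ∀ g : ℝ → ℝ, Continuous g → HasCompactSupport g →
      σ2 * ∫ ω, g (U ω * Xbox ω) ∂μ = ∫ ω, X ω * (∫ u in (0:ℝ)..(X ω), g u) ∂μ := by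
  intro g hgc hgs
  obtain ⟨C, hC⟩ : ∃ C, ∀ x, ‖g x‖ ≤ C := hgs.exists_bound_of_continuous hgc
  have hC0 : 0 ≤ C := le_trans (norm_nonneg _) (hC 0)
  set f : ℝ → ℝ := fun x => ∫ t in (0:ℝ)..1, g (t * x) with hfdef
  -- measurability of f
  have hfm : Measurable f := by
    have h1 : Measurable fun x => ∫ t, g (t * x) ∂(volume.restrict (Set.Ioc (0:ℝ) 1)) :=
      (StronglyMeasurable.integral_prod_right (f := fun x t => g (t * x))
        ((hgc.measurable.comp (measurable_snd.mul measurable_fst)).stronglyMeasurable)).measurable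
    have heq : f = fun x => ∫ t, g (t * x) ∂(volume.restrict (Set.Ioc (0:ℝ) 1)) := by
      funext x
      exact intervalIntegral.integral_of_le zero_le_one
    rw [heq]; exact h1
  -- bound on f
  have hfb : ∀ x, ‖f x‖ ≤ C := by
    intro x
    have := intervalIntegral.norm_integral_le_of_norm_le_const
      (C := C) (f := fun t => g (t * x)) (a := 0) (b := 1) (fun t _ => hC _)
    simpa using this
  -- key pointwise identity : x^2 * f x = x * ∫ u in 0..x, g u
  have hkey : ∀ x : ℝ, x ^ 2 * f x = x * ∫ u in (0:ℝ)..x, g u := by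
    intro x
    rcases eq_or_ne x 0 with rfl | hx
    · simp
    · have := intervalIntegral.integral_comp_mul_right (a := (0:ℝ)) (b := 1) g hx
      rw [hfdef]; simp only [this, zero_mul, one_mul, smul_eq_mul]
      field_simp
  -- distribution facts
  have hUae : AEMeasurable U μ := hUm.aemeasurable
  have hXbae : AEMeasurable Xbox μ := hXboxm.aemeasurable
  have hPU : IsProbabilityMeasure (μ.map U) := Measure.isProbabilityMeasure_map hUae
  have hPXb : IsProbabilityMeasure (μ.map Xbox) := Measure.isProbabilityMeasure_map hXbae
  have hprod : μ.map (fun ω => (U ω, Xbox ω)) = (μ.map U).prod (μ.map Xbox) :=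
    (indepFun_iff_map_prod_eq_prod_map_map hUae hXbae).mp hindep
  -- step A : ∫ g(U*Xbox) = ∫ f(Xbox)
  have hgm2 : Measurable fun p : ℝ × ℝ => g (p.1 * p.2) :=
    hgc.measurable.comp (measurable_fst.mul measurable_snd)
  have hint_prod : Integrable (fun p : ℝ × ℝ => g (p.1 * p.2)) ((μ.map U).prod (μ.map Xbox)) :=
    ⟨hgm2.aestronglyMeasurable, HasFiniteIntegral.of_bounded (C := C)
      (Filter.Eventually.of_forall fun p => hC _)⟩
  have hA : ∫ ω, g (U ω * Xbox ω) ∂μ = ∫ ω, f (Xbox ω) ∂μ := by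
    have h1 : ∫ ω, g (U ω * Xbox ω) ∂μ
        = ∫ p : ℝ × ℝ, g (p.1 * p.2) ∂((μ.map U).prod (μ.map Xbox)) := by
      rw [← hprod, integral_map (hUm.prodMk hXboxm).aemeasurable
        hgm2.aestronglyMeasurable]
    have h2 : ∫ p : ℝ × ℝ, g (p.1 * p.2) ∂((μ.map U).prod (μ.map Xbox))
        = ∫ x, (∫ u, g (u * x) ∂(μ.map U)) ∂(μ.map Xbox) :=
      integral_prod_symm _ hint_prod
    have h3 : ∀ x, (∫ u, g (u * x) ∂(μ.map U)) = f x := by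
      intro x
      rw [hU, integral_Icc_eq_integral_Ioc]
      exact (intervalIntegral.integral_of_le zero_le_one).symm
    have h4 : ∫ x, f x ∂(μ.map Xbox) = ∫ ω, f (Xbox ω) ∂μ :=
      integral_map hXbae hfm.aestronglyMeasurable
    rw [h1, h2]
    simp_rw [h3]
    exact h4
  -- integrabilities for hsq
  have hint1 : Integrable (fun ω => (X ω) ^ 2 * f (X ω)) μ := by
    refine Integrable.mono' (hL2.const_mul C) ((hXm.pow_const 2).mul (hfm.comp hXm)).aestronglyMeasurable
      (Filter.Eventually.of_forall fun ω => ?_)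
    rw [norm_mul]
    calc ‖(X ω) ^ 2‖ * ‖f (X ω)‖ ≤ ‖(X ω) ^ 2‖ * C := by
          exact mul_le_mul_of_nonneg_left (hfb _) (norm_nonneg _)
      _ = C * (X ω) ^ 2 := by rw [norm_pow, Real.norm_eq_abs, sq_abs]; ring
  have hint2 : Integrable (fun ω => f (Xbox ω)) μ :=
    ⟨(hfm.comp hXboxm).aestronglyMeasurable, HasFiniteIntegral.of_bounded (C := C)
      (Filter.Eventually.of_forall fun ω => hfb _)⟩
  have hB := hsq f hfm hint1 hint2
  rw [hA, hB, mul_div_cancel₀ _ (ne_of_gt hσ2)]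
  congr 1
  funext ω
  exact hkey (X ω)
end

section
/- Let ε be a bounded mean zero random variable with variance σ² ∈ (0,∞) satisfying E[ε³]=0, supported in [a,b] with a<0<b. Let Y have the ε-zero bias distribution with density p_Y(y) = σ⁻² E[ε 1(ε>y)]. Then the function h_Y(t) = (∫_t^b y p_Y(y) dy)/p_Y(t) satisfies 0 ≤ h_Y(t) ≤ b²/2 for all t ∈ [0,b]. -/
open MeasureTheory ProbabilityTheory Real

/-- For a bounded mean zero `ε` with variance `σ² ∈ (0,∞)`, `E ε³ = 0`, supported in `[a,b]`
with `a < 0 < b`, the `ε`-zero bias density `pY y = σ⁻² E[ε 1(ε > y)]` and the function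
`hY t = (∫_t^b y pY y dy)/pY t` satisfy `0 ≤ hY t ≤ b²/2` for all `t ∈ [0,b]`. -/
theorem hY_bounded_on_right
    {Ω : Type*} [MeasurableSpace Ω] (μ : Measure Ω) [IsProbabilityMeasure μ]
    (ε : Ω → ℝ) (a b σ2 : ℝ) (ha : a < 0) (hb : 0 < b) (hσ2 : 0 < σ2)
    (hεm : Measurable ε)
    (hsupp : ∀ᵐ ω ∂μ, ε ω ∈ Set.Icc a b)
    (hmean : ∫ ω, ε ω ∂μ = 0)
    (hvar : ∫ ω, ε ω ^ 2 ∂μ = σ2)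
    (h3 : ∫ ω, ε ω ^ 3 ∂μ = 0)
    (pY : ℝ → ℝ) (hpY : ∀ y, pY y = σ2⁻¹ * ∫ ω in {ω | y < ε ω}, ε ω ∂μ)
    (hY : ℝ → ℝ) (hhY : ∀ t, hY t = (∫ y in t..b, y * pY y) / pY t) :
    ∀ t ∈ Set.Icc (0 : ℝ) b, 0 ≤ hY t ∧ hY t ≤ b ^ 2 / 2 := by
  -- integrability of ε
  have hεint : Integrable ε μ := by
    refine Integrable.mono' (integrable_const (max |a| |b|)) hεm.aestronglyMeasurable ?_
    exact hsupp.mono fun ω h => by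
      rw [Real.norm_eq_abs]; exact abs_le_max_abs_abs h.1 h.2
  have hmeasset : ∀ y : ℝ, MeasurableSet {ω | y < ε ω} := fun y =>
    measurableSet_lt measurable_const hεm
  -- nonnegativity of the set integral for y ≥ 0
  have hIpos : ∀ y : ℝ, 0 ≤ y → 0 ≤ ∫ ω in {ω | y < ε ω}, ε ω ∂μ := fun y hy =>
    setIntegral_nonneg (hmeasset y) fun ω hω => le_of_lt (lt_of_le_of_lt hy hω)
  have hpYpos : ∀ y : ℝ, 0 ≤ y → 0 ≤ pY y := fun y hy => by
    rw [hpY y]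
    exact mul_nonneg (inv_nonneg.2 hσ2.le) (hIpos y hy)
  -- antitonicity of pY on [0, ∞)
  have hanti : ∀ y1 y2 : ℝ, 0 ≤ y1 → y1 ≤ y2 → pY y2 ≤ pY y1 := by
    intro y1 y2 h0 h12
    rw [hpY y1, hpY y2]
    refine mul_le_mul_of_nonneg_left ?_ (inv_nonneg.2 hσ2.le)
    refine setIntegral_mono_set hεint.integrableOn ?_ ?_
    · refine (ae_restrict_iff' (hmeasset y1)).2 (ae_of_all _ fun ω hω => ?_)
      exact le_of_lt (lt_of_le_of_lt h0 hω)
    · refine HasSubset.Subset.eventuallyLE fun ω hω => ?_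
      exact lt_of_le_of_lt h12 hω
  intro t ht
  obtain ⟨ht0, htb⟩ := ht
  have hct : 0 ≤ pY t := hpYpos t ht0
  have hantiOn : AntitoneOn pY (Set.uIcc t b) := by
    rw [Set.uIcc_of_le htb]
    intro x hx y hy hxy
    exact hanti x y (le_trans ht0 hx.1) hxy
  have hpYii : IntervalIntegrable pY MeasureTheory.volume t b :=
    hantiOn.intervalIntegrable
  have hfii : IntervalIntegrable (fun y => y * pY y) MeasureTheory.volume t b :=
    hpYii.continuousOn_mul continuousOn_id
  have hnum_nonneg : 0 ≤ ∫ y in t..b, y * pY y := by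
    refine intervalIntegral.integral_nonneg htb fun u hu => ?_
    exact mul_nonneg (le_trans ht0 hu.1) (hpYpos u (le_trans ht0 hu.1))
  have hnum_le : (∫ y in t..b, y * pY y) ≤ b ^ 2 / 2 * pY t := by
    have h1 : (∫ y in t..b, y * pY y) ≤ ∫ y in t..b, y * pY t := by
      refine intervalIntegral.integral_mono_on htb hfii ?_ fun u hu => ?_
      · exact (intervalIntegrable_const).continuousOn_mul continuousOn_id
      · exact mul_le_mul_of_nonneg_left (hanti t u ht0 hu.1) (le_trans ht0 hu.1)
    have h2 : (∫ y in t..b, y * pY t) = (b ^ 2 - t ^ 2) / 2 * pY t := by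
      rw [intervalIntegral.integral_mul_const, _root_.integral_id]
    have h3' : (b ^ 2 - t ^ 2) / 2 * pY t ≤ b ^ 2 / 2 * pY t := by
      refine mul_le_mul_of_nonneg_right ?_ hct
      nlinarith [sq_nonneg t]
    linarith
  rw [hhY t]
  constructor
  · exact div_nonneg hnum_nonneg hct
  · rcases eq_or_lt_of_le hct with hc0 | hc0
    · rw [← hc0] at hnum_le ⊢
      simp only [mul_zero] at hnum_le
      rw [div_zero]
      positivity
    · rw [div_le_iff₀ hc0]
      linarith
end

section
/- For every bounded random variable X with mean μ and support contained in an interval of length ℓ, if θ satisfies ℓ²θ² < 2, then for X₁, X₂, ... i.i.d. copies of X and Sₙ = X₁+⋯+Xₙ, one has E[exp(θ² Sₙ²/n)] ≤ (1 − ℓ²θ²/2)⁻¹ exp( n θ² μ² / (1 − ℓ²θ²/2) ) for all n ≥ 1. -/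
open MeasureTheory ProbabilityTheory Real
open scoped ENNReal

/-- Core analytic inequality for Hoeffding's lemma. -/
lemma hoeff_core {p : ℝ} (hp : 0 ≤ p) (hp1 : p ≤ 1) (u : ℝ) :
    (1 - p) + p * Real.exp u ≤ Real.exp (p * u + u ^ 2 / 8) := by
  have hD : ∀ x : ℝ, 0 < 1 - p + p * Real.exp x := by
    intro x
    rcases eq_or_lt_of_le hp with h | h
    · simp [← h]
    · nlinarith [Real.exp_pos x, mul_pos h (Real.exp_pos x)]
  set g : ℝ → ℝ := fun x => p * x + x ^ 2 / 8 - Real.log (1 - p + p * Real.exp x) with hg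
  set G : ℝ → ℝ := fun x => p + x / 4 - p * Real.exp x / (1 - p + p * Real.exp x) with hG
  have hder1 : ∀ x, HasDerivAt g (G x) x := by
    intro x
    have h1 : HasDerivAt (fun x : ℝ => p * x) p x := by
      simpa using (hasDerivAt_id x).const_mul p
    have h2 : HasDerivAt (fun x : ℝ => x ^ 2 / 8) (x / 4) x := by
      have := (hasDerivAt_pow 2 x).div_const 8
      refine this.congr_deriv ?_
      ring
    have hDd : HasDerivAt (fun x : ℝ => 1 - p + p * Real.exp x) (p * Real.exp x) x := by
      simpa using ((Real.hasDerivAt_exp x).const_mul p).const_add (1 - p)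
    have h3 : HasDerivAt (fun x : ℝ => Real.log (1 - p + p * Real.exp x))
        (p * Real.exp x / (1 - p + p * Real.exp x)) x := hDd.log (hD x).ne'
    exact (h1.add h2).sub h3
  have hder2 : ∀ x, HasDerivAt G
      (1 / 4 - p * (1 - p) * Real.exp x / (1 - p + p * Real.exp x) ^ 2) x := by
    intro x
    have h2 : HasDerivAt (fun x : ℝ => x / 4) (1 / 4) x := by
      simpa using (hasDerivAt_id x).div_const 4
    have hNum : HasDerivAt (fun x : ℝ => p * Real.exp x) (p * Real.exp x) x :=
      (Real.hasDerivAt_exp x).const_mul p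
    have hDd : HasDerivAt (fun x : ℝ => 1 - p + p * Real.exp x) (p * Real.exp x) x := by
      simpa using ((Real.hasDerivAt_exp x).const_mul p).const_add (1 - p)
    have h3 := hNum.div hDd (hD x).ne'
    have h1 : HasDerivAt (fun x : ℝ => p + x / 4) (1 / 4) x := h2.const_add p
    have := h1.sub h3
    refine this.congr_deriv ?_
    have hne := (hD x).ne'
    field_simp
    ring
  have hG0 : G 0 = 0 := by
    simp [hG]
  have hGmono : Monotone G := by
    have hdiff : Differentiable ℝ G := fun x => (hder2 x).differentiableAt
    apply monotone_of_deriv_nonneg hdiff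
    intro x
    rw [(hder2 x).deriv]
    rw [sub_nonneg, div_le_iff₀ (pow_pos (hD x) 2)]
    nlinarith [sq_nonneg ((1 - p) - p * Real.exp x), Real.exp_pos x]
  have hgdiff : Differentiable ℝ g := fun x => (hder1 x).differentiableAt
  have hgcont : Continuous g := hgdiff.continuous
  have hg0 : g 0 = 0 := by simp [hg]
  have hgnonneg : ∀ x, 0 ≤ g x := by
    intro x
    rcases le_total 0 x with hx | hx
    · have hmono : MonotoneOn g (Set.Ici 0) := by
        apply monotoneOn_of_deriv_nonneg (convex_Ici 0) hgcont.continuousOn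
          (fun y _ => hgdiff y |>.differentiableWithinAt)
        intro y hy
        rw [interior_Ici] at hy
        rw [(hder1 y).deriv, ← hG0]
        exact hGmono hy.le
      have := hmono (Set.mem_Ici.2 le_rfl) (Set.mem_Ici.2 hx) hx
      linarith [this, hg0]
    · have hanti : AntitoneOn g (Set.Iic 0) := by
        apply antitoneOn_of_deriv_nonpos (convex_Iic 0) hgcont.continuousOn
          (fun y _ => hgdiff y |>.differentiableWithinAt)
        intro y hy
        rw [interior_Iic] at hy
        rw [(hder1 y).deriv, ← hG0]
        exact hGmono hy.le
      have := hanti (Set.mem_Iic.2 hx) (Set.mem_Iic.2 le_rfl) hx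
      linarith [this, hg0]
  have h := hgnonneg u
  have hlog : Real.log (1 - p + p * Real.exp u) ≤ p * u + u ^ 2 / 8 := by
    simp only [hg] at h; linarith
  calc (1 - p) + p * Real.exp u = Real.exp (Real.log (1 - p + p * Real.exp u)) := by
        rw [Real.exp_log (hD u)]
    _ ≤ Real.exp (p * u + u ^ 2 / 8) := Real.exp_le_exp.2 hlog

/-- Hoeffding's lemma. -/
lemma hoeff_mgf {Ω : Type*} [MeasurableSpace Ω] (μ : Measure Ω) [IsProbabilityMeasure μ]
    {Y : Ω → ℝ} (hY : Measurable Y) {c ℓ : ℝ} (hℓ : 0 ≤ ℓ)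
    (hb : ∀ᵐ ω ∂μ, Y ω ∈ Set.Icc c (c + ℓ)) (t : ℝ) :
    ∫ ω, Real.exp (t * Y ω) ∂μ
      ≤ Real.exp (t * (∫ ω, Y ω ∂μ) + t ^ 2 * ℓ ^ 2 / 8) := by
  set m := ∫ ω, Y ω ∂μ with hm
  have habs : ∀ᵐ ω ∂μ, |Y ω| ≤ |c| + ℓ := by
    filter_upwards [hb] with ω hω
    rw [abs_le]
    constructor
    · have := hω.1; cases abs_cases c with
      | inl h => nlinarith [h.1]
      | inr h => nlinarith [h.1]
    · have := hω.2; cases abs_cases c with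
      | inl h => nlinarith [h.1]
      | inr h => nlinarith [h.1]
  have hYint : Integrable Y μ := by
    refine Integrable.mono' (integrable_const (|c| + ℓ)) hY.aestronglyMeasurable ?_
    filter_upwards [habs] with ω hω using by rwa [Real.norm_eq_abs]
  have hmc : c ≤ m := by
    rw [hm]
    calc c = ∫ _ : Ω, c ∂μ := by simp
    _ ≤ _ := integral_mono_ae (integrable_const c) hYint (by filter_upwards [hb] with ω hω using hω.1)
  have hmcl : m ≤ c + ℓ := by
    rw [hm]
    calc ∫ ω, Y ω ∂μ ≤ ∫ _ : Ω, (c + ℓ) ∂μ :=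
        integral_mono_ae hYint (integrable_const _) (by filter_upwards [hb] with ω hω using hω.2)
    _ = c + ℓ := by simp
  rcases eq_or_lt_of_le hℓ with hℓ0 | hℓ0
  · have hYc : ∀ᵐ ω ∂μ, Y ω = c := by
      filter_upwards [hb] with ω hω
      have h1 := hω.1; have h2 := hω.2; rw [← hℓ0] at h2; linarith
    have hmeq : m = c := le_antisymm (by rw [← hℓ0] at hmcl; linarith) hmc
    have : ∫ ω, Real.exp (t * Y ω) ∂μ = Real.exp (t * c) := by
      rw [integral_congr_ae (g := fun _ => Real.exp (t * c))
        (by filter_upwards [hYc] with ω hω; rw [hω])]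
      simp
    rw [this, hmeq]
    apply Real.exp_le_exp.2
    nlinarith [sq_nonneg t, sq_nonneg ℓ]
  · set p := (m - c) / ℓ with hp
    set E1 := Real.exp (t * c) with hE1
    set E2 := Real.exp (t * (c + ℓ)) with hE2
    have hp0 : 0 ≤ p := div_nonneg (by linarith) hℓ
    have hp1 : p ≤ 1 := (div_le_one hℓ0).2 (by linarith)
    have hpt : ∀ᵐ ω ∂μ, Real.exp (t * Y ω)
        ≤ ((c + ℓ - Y ω) / ℓ) * E1 + ((Y ω - c) / ℓ) * E2 := by
      filter_upwards [hb] with ω hω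
      have h1 : (0:ℝ) ≤ (c + ℓ - Y ω) / ℓ := div_nonneg (by linarith [hω.2]) hℓ
      have h2 : (0:ℝ) ≤ (Y ω - c) / ℓ := div_nonneg (by linarith [hω.1]) hℓ
      have h3 : (c + ℓ - Y ω) / ℓ + (Y ω - c) / ℓ = 1 := by field_simp; ring
      have := convexOn_exp.2 (Set.mem_univ (t * c)) (Set.mem_univ (t * (c + ℓ))) h1 h2 h3
      simp only [smul_eq_mul] at this
      have harg : (c + ℓ - Y ω) / ℓ * (t * c) + (Y ω - c) / ℓ * (t * (c + ℓ)) = t * Y ω := by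
        field_simp; ring
      rwa [harg] at this
    have hexp_int : Integrable (fun ω => Real.exp (t * Y ω)) μ := by
      refine Integrable.mono' (integrable_const (Real.exp (|t| * (|c| + ℓ))))
        ((hY.const_mul t).exp.aestronglyMeasurable) ?_
      filter_upwards [habs] with ω hω
      rw [Real.norm_eq_abs, Real.abs_exp]
      apply Real.exp_le_exp.2
      calc t * Y ω ≤ |t * Y ω| := le_abs_self _
        _ = |t| * |Y ω| := abs_mul _ _
        _ ≤ |t| * (|c| + ℓ) := mul_le_mul_of_nonneg_left hω (abs_nonneg t)
    have hfun1 : (fun ω => ((c + ℓ - Y ω) / ℓ) * E1)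
        = fun ω => ((c + ℓ) / ℓ * E1) - (E1 / ℓ) * Y ω := by funext ω; ring
    have hfun2 : (fun ω => ((Y ω - c) / ℓ) * E2)
        = fun ω => (E2 / ℓ) * Y ω - (c / ℓ * E2) := by funext ω; ring
    have i1 : Integrable (fun ω => ((c + ℓ - Y ω) / ℓ) * E1) μ := by
      rw [hfun1]; exact (integrable_const _).sub (hYint.const_mul _)
    have i2 : Integrable (fun ω => ((Y ω - c) / ℓ) * E2) μ := by
      rw [hfun2]; exact (hYint.const_mul _).sub (integrable_const _)
    have hint : ∫ ω, Real.exp (t * Y ω) ∂μ ≤ (1 - p) * E1 + p * E2 := by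
      calc ∫ ω, Real.exp (t * Y ω) ∂μ
          ≤ ∫ ω, (((c + ℓ - Y ω) / ℓ) * E1 + ((Y ω - c) / ℓ) * E2) ∂μ :=
            integral_mono_ae hexp_int (i1.add i2) hpt
        _ = (1 - p) * E1 + p * E2 := by
            rw [integral_add i1 i2]
            congr 1
            · rw [hfun1, integral_sub (integrable_const _) (hYint.const_mul _),
                integral_const, integral_const_mul, probReal_univ]
              simp only [ENNReal.toReal_one, smul_eq_mul, one_mul, ← hm, hp]
              field_simp
              ring
            · rw [hfun2, integral_sub (hYint.const_mul _) (integrable_const _),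
                integral_const, integral_const_mul, probReal_univ]
              simp only [ENNReal.toReal_one, smul_eq_mul, one_mul, ← hm, hp]
              field_simp
    have hE21 : E2 = E1 * Real.exp (t * ℓ) := by
      rw [hE1, hE2, ← Real.exp_add]; ring_nf
    have hcore := hoeff_core hp0 hp1 (t * ℓ)
    calc ∫ ω, Real.exp (t * Y ω) ∂μ
        ≤ (1 - p) * E1 + p * E2 := hint
      _ = E1 * ((1 - p) + p * Real.exp (t * ℓ)) := by rw [hE21]; ring
      _ ≤ E1 * Real.exp (p * (t * ℓ) + (t * ℓ) ^ 2 / 8) :=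
          mul_le_mul_of_nonneg_left hcore (Real.exp_nonneg _)
      _ = Real.exp (t * m + t ^ 2 * ℓ ^ 2 / 8) := by
          rw [hE1, ← Real.exp_add]
          congr 1
          have hple : p * (t * ℓ) = t * (m - c) := by
            rw [hp]; field_simp
          rw [hple]; ring

lemma gauss_lin_integrable {q : ℝ} (hq : 0 < q) (a : ℝ) :
    Integrable (fun v : ℝ => Real.exp (a * v - q * v ^ 2)) := by
  have key : ∀ v : ℝ, a * v - q * v ^ 2
      = a ^ 2 / (4 * q) + (-q * (v - a / (2 * q)) ^ 2) := by
    intro v; field_simp; ring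
  simp_rw [key, Real.exp_add]
  exact ((integrable_exp_neg_mul_sq hq).comp_sub_right (a / (2 * q))).const_mul _

lemma gauss_lin {q : ℝ} (hq : 0 < q) (a : ℝ) :
    ∫ v : ℝ, Real.exp (a * v - q * v ^ 2)
      = Real.sqrt (π / q) * Real.exp (a ^ 2 / (4 * q)) := by
  have key : ∀ v : ℝ, a * v - q * v ^ 2
      = a ^ 2 / (4 * q) + (-q * (v - a / (2 * q)) ^ 2) := by
    intro v; field_simp; ring
  simp_rw [key, Real.exp_add]
  rw [MeasureTheory.integral_const_mul]
  rw [integral_sub_right_eq_self (fun v => Real.exp (-q * v ^ 2)) (a / (2 * q))]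
  rw [integral_gaussian]
  ring

/-- For a bounded random variable `X` with mean `m` supported in an interval of length `ℓ`,
if `ℓ²θ² < 2`, then for i.i.d. copies `Xs 0, Xs 1, ...` of `X` and `Sₙ = Σ_{i<n} Xs i`,
`E[exp(θ² Sₙ²/n)] ≤ (1 − ℓ²θ²/2)⁻¹ exp(n θ² m² / (1 − ℓ²θ²/2))` for all `n ≥ 1`. -/
theorem hoeffding_sum_square_mgf
    {Ω : Type*} [MeasurableSpace Ω] (μ : Measure Ω) [IsProbabilityMeasure μ]
    (X : Ω → ℝ) (Xs : ℕ → Ω → ℝ) (m ℓ θ : ℝ) (hℓ : 0 ≤ ℓ)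
    (hXm : Measurable X) (hXsm : ∀ i, Measurable (Xs i))
    (hbdd : ∃ c : ℝ, ∀ᵐ ω ∂μ, X ω ∈ Set.Icc c (c + ℓ))
    (hmean : ∫ ω, X ω ∂μ = m)
    (hiid : iIndepFun Xs μ)
    (hid : ∀ i, IdentDistrib (Xs i) X μ μ)
    (hθ : ℓ ^ 2 * θ ^ 2 < 2) :
    ∀ n : ℕ, 1 ≤ n →
      ∫ ω, Real.exp (θ ^ 2 * (∑ i ∈ Finset.range n, Xs i ω) ^ 2 / n) ∂μ
        ≤ (1 - ℓ ^ 2 * θ ^ 2 / 2)⁻¹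
            * Real.exp (n * θ ^ 2 * m ^ 2 / (1 - ℓ ^ 2 * θ ^ 2 / 2)) := by
  intro n hn
  obtain ⟨c, hbc⟩ := hbdd
  have hnpos : (0:ℝ) < n := by exact_mod_cast Nat.lt_of_lt_of_le Nat.zero_lt_one hn
  set S : Ω → ℝ := fun ω => ∑ i ∈ Finset.range n, Xs i ω with hSdef
  have hS : Measurable S := Finset.measurable_sum _ (fun i _ => hXsm i)
  -- transfer boundedness and mean to the Xs i
  have hXs_bdd : ∀ i, ∀ᵐ ω ∂μ, Xs i ω ∈ Set.Icc c (c + ℓ) := by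
    intro i
    have h1 : ∀ᵐ x ∂(Measure.map X μ), x ∈ Set.Icc c (c + ℓ) :=
      (ae_map_iff hXm.aemeasurable measurableSet_Icc).2 hbc
    rw [← (hid i).map_eq] at h1
    exact (ae_map_iff (hXsm i).aemeasurable measurableSet_Icc).1 h1
  have hmean_i : ∀ i, ∫ ω, Xs i ω ∂μ = m := fun i => (hid i).integral_eq.trans hmean
  -- bounds on S
  have hSbdd : ∀ᵐ ω ∂μ, (n:ℝ) * c ≤ S ω ∧ S ω ≤ (n:ℝ) * (c + ℓ) := by
    have hall : ∀ᵐ ω ∂μ, ∀ i, Xs i ω ∈ Set.Icc c (c + ℓ) := ae_all_iff.2 hXs_bdd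
    filter_upwards [hall] with ω hω
    constructor
    · calc (n:ℝ) * c = ∑ _i ∈ Finset.range n, c := by
            rw [Finset.sum_const, Finset.card_range, nsmul_eq_mul]
        _ ≤ S ω := Finset.sum_le_sum fun i _ => (hω i).1
    · calc S ω ≤ ∑ _i ∈ Finset.range n, (c + ℓ) := Finset.sum_le_sum fun i _ => (hω i).2
        _ = (n:ℝ) * (c + ℓ) := by rw [Finset.sum_const, Finset.card_range, nsmul_eq_mul]
  set K : ℝ := |(n:ℝ) * c| + |(n:ℝ) * (c + ℓ)| with hK
  have hSabs : ∀ᵐ ω ∂μ, |S ω| ≤ K := by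
    filter_upwards [hSbdd] with ω hω
    rw [abs_le]
    constructor
    · nlinarith [neg_abs_le ((n:ℝ) * c), abs_nonneg ((n:ℝ) * (c + ℓ)), hω.1]
    · nlinarith [le_abs_self ((n:ℝ) * (c + ℓ)), abs_nonneg ((n:ℝ) * c), hω.2]
  have hexpS_int : ∀ t : ℝ, Integrable (fun ω => Real.exp (t * S ω)) μ := by
    intro t
    refine Integrable.mono' (integrable_const (Real.exp (|t| * K)))
      ((hS.const_mul t).exp.aestronglyMeasurable) ?_
    filter_upwards [hSabs] with ω hω
    rw [Real.norm_eq_abs, Real.abs_exp]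
    apply Real.exp_le_exp.2
    calc t * S ω ≤ |t * S ω| := le_abs_self _
      _ = |t| * |S ω| := abs_mul _ _
      _ ≤ |t| * K := mul_le_mul_of_nonneg_left hω (abs_nonneg t)
  -- mgf bound for S
  have hmgf_bound : ∀ t : ℝ, ∫ ω, Real.exp (t * S ω) ∂μ
      ≤ Real.exp ((n:ℝ) * (t * m + t ^ 2 * ℓ ^ 2 / 8)) := by
    intro t
    have h1 : ∫ ω, Real.exp (t * S ω) ∂μ = mgf (∑ i ∈ Finset.range n, Xs i) μ t := by
      simp only [mgf, hSdef, Finset.sum_apply]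
    rw [h1, hiid.mgf_sum hXsm]
    have hle : ∀ i ∈ Finset.range n, mgf (Xs i) μ t
        ≤ Real.exp (t * m + t ^ 2 * ℓ ^ 2 / 8) := by
      intro i _
      have h2 := hoeff_mgf μ (hXsm i) hℓ (hXs_bdd i) t
      rw [hmean_i i] at h2
      simpa [mgf] using h2
    calc ∏ i ∈ Finset.range n, mgf (Xs i) μ t
        ≤ ∏ _i ∈ Finset.range n, Real.exp (t * m + t ^ 2 * ℓ ^ 2 / 8) :=
          Finset.prod_le_prod (fun i _ => mgf_nonneg) hle
      _ = Real.exp (t * m + t ^ 2 * ℓ ^ 2 / 8) ^ n := by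
          rw [Finset.prod_const, Finset.card_range]
      _ = Real.exp ((n:ℝ) * (t * m + t ^ 2 * ℓ ^ 2 / 8)) := by
          rw [← Real.exp_nat_mul]
  -- constants
  set r : ℝ := 1 - ℓ ^ 2 * θ ^ 2 / 2 with hr
  have hrpos : 0 < r := by rw [hr]; nlinarith
  have hr1 : r ≤ 1 := by rw [hr]; nlinarith [sq_nonneg ℓ, sq_nonneg θ, sq_nonneg (ℓ * θ)]
  set q : ℝ := r / 2 with hq
  have hqpos : 0 < q := by positivity
  set k : ℝ := Real.sqrt (2 * θ ^ 2 / n) with hkdef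
  have hk2 : k ^ 2 = 2 * θ ^ 2 / n := Real.sq_sqrt (by positivity)
  have hnk2 : (n:ℝ) * k ^ 2 = 2 * θ ^ 2 := by
    rw [hk2]; field_simp
  set A : ℝ := (n:ℝ) * k * m with hA
  -- Step I: pointwise Gaussian identity
  have hptwise : ∀ s : ℝ, ∫ v : ℝ, Real.exp (k * s * v - (1/2) * v ^ 2)
      = Real.sqrt (2 * π) * Real.exp (θ ^ 2 * s ^ 2 / n) := by
    intro s
    rw [gauss_lin one_half_pos (k * s)]
    congr 1
    · congr 1; ring
    · congr 1
      rw [mul_pow, hk2]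
      field_simp
      ring
  -- measurability of the product integrand
  have hFmeas : Measurable (fun p : Ω × ℝ =>
      ENNReal.ofReal (Real.exp (k * S p.1 * p.2 - (1/2) * p.2 ^ 2))) := by
    apply Measurable.ennreal_ofReal
    apply Measurable.exp
    exact (((hS.comp measurable_fst).const_mul k).mul measurable_snd).sub
      ((measurable_snd.pow_const 2).const_mul (1/2))
  -- the double lintegral
  set L : ℝ≥0∞ := ∫⁻ ω, ENNReal.ofReal (Real.exp (θ ^ 2 * S ω ^ 2 / n)) ∂μ with hL
  have hstepI : ∫⁻ ω, (∫⁻ v, ENNReal.ofReal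
        (Real.exp (k * S ω * v - (1/2) * v ^ 2)) ∂(volume : Measure ℝ)) ∂μ
      = ENNReal.ofReal (Real.sqrt (2 * π)) * L := by
    have hptinner : ∀ ω, (∫⁻ v, ENNReal.ofReal
        (Real.exp (k * S ω * v - (1/2) * v ^ 2)) ∂(volume : Measure ℝ))
        = ENNReal.ofReal (Real.sqrt (2 * π)) *
          ENNReal.ofReal (Real.exp (θ ^ 2 * S ω ^ 2 / n)) := by
      intro ω
      rw [← ofReal_integral_eq_lintegral_ofReal (gauss_lin_integrable one_half_pos (k * S ω))
        (Filter.Eventually.of_forall fun v => (Real.exp_pos _).le)]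
      rw [hptwise (S ω), ENNReal.ofReal_mul (Real.sqrt_nonneg _)]
    simp_rw [hptinner]
    rw [lintegral_const_mul _ (((hS.pow_const 2).const_mul (θ^2)).div_const (n:ℝ)).exp.ennreal_ofReal]
  -- swap
  have hswap : ∫⁻ ω, (∫⁻ v, ENNReal.ofReal
        (Real.exp (k * S ω * v - (1/2) * v ^ 2)) ∂(volume : Measure ℝ)) ∂μ
      = ∫⁻ v, (∫⁻ ω, ENNReal.ofReal
        (Real.exp (k * S ω * v - (1/2) * v ^ 2)) ∂μ) ∂(volume : Measure ℝ) :=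
    lintegral_lintegral_swap hFmeas.aemeasurable
  -- inner bound
  have hinner : ∀ v : ℝ, (∫⁻ ω, ENNReal.ofReal
        (Real.exp (k * S ω * v - (1/2) * v ^ 2)) ∂μ)
      ≤ ENNReal.ofReal (Real.exp (A * v - q * v ^ 2)) := by
    intro v
    have hsplit : ∀ ω, Real.exp (k * S ω * v - (1/2) * v ^ 2)
        = Real.exp ((k * v) * S ω) * Real.exp (-(1/2) * v ^ 2) := by
      intro ω; rw [← Real.exp_add]; ring_nf
    simp_rw [hsplit]
    simp_rw [ENNReal.ofReal_mul' (Real.exp_nonneg _)]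
    rw [lintegral_mul_const _ (((hS.const_mul (k*v)).exp).ennreal_ofReal)]
    rw [← ofReal_integral_eq_lintegral_ofReal (hexpS_int (k * v))
      (Filter.Eventually.of_forall fun ω => (Real.exp_pos _).le)]
    rw [← ENNReal.ofReal_mul (by positivity)]
    apply ENNReal.ofReal_le_ofReal
    calc (∫ ω, Real.exp ((k * v) * S ω) ∂μ) * Real.exp (-(1/2) * v ^ 2)
        ≤ Real.exp ((n:ℝ) * ((k * v) * m + (k * v) ^ 2 * ℓ ^ 2 / 8))
            * Real.exp (-(1/2) * v ^ 2) :=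
          mul_le_mul_of_nonneg_right (hmgf_bound (k * v)) (Real.exp_nonneg _)
      _ = Real.exp (A * v - q * v ^ 2) := by
          rw [← Real.exp_add]
          congr 1
          rw [hA, hq, hr]
          linear_combination (v ^ 2 * ℓ ^ 2 / 8) * hnk2
  -- outer integral
  have houter : (∫⁻ v, ENNReal.ofReal (Real.exp (A * v - q * v ^ 2)) ∂(volume : Measure ℝ))
      = ENNReal.ofReal (Real.sqrt (π / q) * Real.exp (A ^ 2 / (4 * q))) := by
    rw [← ofReal_integral_eq_lintegral_ofReal (gauss_lin_integrable hqpos A)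
      (Filter.Eventually.of_forall fun v => (Real.exp_pos _).le)]
    rw [gauss_lin hqpos A]
  -- combine
  have hmain : ENNReal.ofReal (Real.sqrt (2 * π)) * L
      ≤ ENNReal.ofReal (Real.sqrt (π / q) * Real.exp (A ^ 2 / (4 * q))) := by
    rw [← hstepI, hswap, ← houter]
    exact lintegral_mono hinner
  -- the final real-valued constant
  set M : ℝ := (Real.sqrt r)⁻¹ * Real.exp ((n:ℝ) * θ ^ 2 * m ^ 2 / r) with hM
  have hconst : Real.sqrt (π / q) * Real.exp (A ^ 2 / (4 * q)) = Real.sqrt (2 * π) * M := by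
    rw [hM]
    have hfac : Real.sqrt (π / q) = Real.sqrt (2 * π) * (Real.sqrt r)⁻¹ := by
      rw [← Real.sqrt_inv, ← Real.sqrt_mul (by positivity)]
      congr 1
      rw [hq]
      field_simp
    have hexp : A ^ 2 / (4 * q) = (n:ℝ) * θ ^ 2 * m ^ 2 / r := by
      rw [hA, hq]
      have hA2 : ((n:ℝ) * k * m) ^ 2 = 2 * (n:ℝ) * θ ^ 2 * m ^ 2 := by
        have : ((n:ℝ) * k * m) ^ 2 = (n:ℝ) * ((n:ℝ) * k ^ 2) * m ^ 2 := by ring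
        rw [this, hnk2]; ring
      rw [hA2]
      field_simp
      ring
    rw [hfac, hexp]; ring
  have hLM : L ≤ ENNReal.ofReal M := by
    have h2 : ENNReal.ofReal (Real.sqrt (2 * π)) * L
        ≤ ENNReal.ofReal (Real.sqrt (2 * π)) * ENNReal.ofReal M := by
      rw [← ENNReal.ofReal_mul (Real.sqrt_nonneg _), ← hconst]
      exact hmain
    have hsne : (ENNReal.ofReal (Real.sqrt (2 * π))) ≠ 0 := by
      simp [ENNReal.ofReal_eq_zero, not_le]
      positivity
    exact (ENNReal.mul_le_mul_iff_right hsne ENNReal.ofReal_ne_top).1 h2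
  -- back to the Bochner integral
  have hMnonneg : 0 ≤ M := by positivity
  have heq : ∫ ω, Real.exp (θ ^ 2 * S ω ^ 2 / n) ∂μ = L.toReal := by
    rw [hL, integral_eq_lintegral_of_nonneg_ae
      (Filter.Eventually.of_forall fun ω => (Real.exp_pos _).le)
      ((((hS.pow_const 2).const_mul (θ^2)).div_const (n:ℝ)).exp.aestronglyMeasurable)]
  have hfinal : ∫ ω, Real.exp (θ ^ 2 * S ω ^ 2 / n) ∂μ ≤ M := by
    rw [heq]
    exact ENNReal.toReal_le_of_le_ofReal hMnonneg hLM
  refine le_trans hfinal ?_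
  rw [hM, hr]
  apply mul_le_mul_of_nonneg_right _ (Real.exp_nonneg _)
  rw [← hr]
  have hsq : r ≤ Real.sqrt r := by
    have h1 : Real.sqrt r ≤ 1 := by
      rw [← Real.sqrt_one]; exact Real.sqrt_le_sqrt hr1
    have h2 : Real.sqrt r * Real.sqrt r = r := Real.mul_self_sqrt hrpos.le
    calc r = Real.sqrt r * Real.sqrt r := h2.symm
      _ ≤ 1 * Real.sqrt r := mul_le_mul_of_nonneg_right h1 (Real.sqrt_nonneg r)
      _ = Real.sqrt r := one_mul _
  exact inv_anti₀ (by positivity) hsq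
end

section
/- Let ε₁,...,εₙ be elements of a finite set 𝒜 ⊂ ℝ, π a uniform random permutation of {1,...,n}, B = max_{a∈𝒜} |a|, and W_k = Σ_{i=1}^k ε_{π(i)} − (k/n) Σ_{i=1}^n ε_{π(i)}. Then for all θ ∈ ℝ and 1 ≤ k ≤ n, E[exp(θ W_k/√k)] ≤ exp(B² θ²). -/
open Finset

/-- The centered partial sum statistic. -/
noncomputable def Wstat (n k : ℕ) (ε : Fin n → ℝ) (p : Equiv.Perm (Fin n)) : ℝ :=
  (∑ i ∈ Finset.univ.filter (fun i : Fin n => (i : ℕ) < k), ε (p i))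
    - (k / n : ℝ) * ∑ i, ε (p i)

lemma scalar_ineq {u : ℝ} (hu : 0 ≤ u) : Real.exp u - 1 ≤ u * (Real.exp u + 1) / 2 := by
  have key : MonotoneOn (fun u => u * (Real.exp u + 1) / 2 - (Real.exp u - 1)) (Set.Ici (0:ℝ)) := by
    apply monotoneOn_of_deriv_nonneg (convex_Ici 0)
    · fun_prop
    · apply Differentiable.differentiableOn; fun_prop
    · intro t _
      have hd : HasDerivAt (fun u => u * (Real.exp u + 1) / 2 - (Real.exp u - 1))
          ((1 * (Real.exp t + 1) + t * Real.exp t) / 2 - Real.exp t) t :=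
        (((hasDerivAt_id t).mul ((Real.hasDerivAt_exp t).add_const 1)).div_const 2).sub
          ((Real.hasDerivAt_exp t).sub_const 1)
      rw [hd.deriv]
      have h2 : (1 : ℝ) - t ≤ Real.exp (-t) := by linarith [Real.add_one_le_exp (-t)]
      have h3 : Real.exp t * Real.exp (-t) = 1 := by rw [← Real.exp_add]; simp
      nlinarith [Real.exp_pos t, Real.exp_pos (-t)]
  have := key (Set.self_mem_Ici) (show u ∈ Set.Ici (0:ℝ) from hu) hu
  simp only [zero_mul, Real.exp_zero] at this
  linarith

/-- Pointwise exchange inequality. -/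
lemma pointwise_ineq {s a b B : ℝ} (hs : 0 ≤ s) (hab : |a - b| ≤ 2 * B) :
    (a - b) * (Real.exp (s * a) - Real.exp (s * b))
      ≤ 2 * s * B ^ 2 * (Real.exp (s * a) + Real.exp (s * b)) := by
  have core : ∀ x y : ℝ, y ≤ x → |x - y| ≤ 2 * B →
      (x - y) * (Real.exp (s * x) - Real.exp (s * y))
        ≤ 2 * s * B ^ 2 * (Real.exp (s * x) + Real.exp (s * y)) := by
    intro x y hyx habs
    have hd : 0 ≤ x - y := by linarith
    have hdB : x - y ≤ 2 * B := by rwa [abs_of_nonneg hd] at habs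
    have hu : 0 ≤ s * (x - y) := mul_nonneg hs hd
    have hsc := scalar_ineq hu
    -- exp (s*x) = exp (s*y) * exp (s*(x-y))
    have hsplit : Real.exp (s * x) = Real.exp (s * y) * Real.exp (s * (x - y)) := by
      rw [← Real.exp_add]; ring_nf
    have hy := Real.exp_pos (s * y)
    have hB0 : 0 ≤ B := by nlinarith [abs_nonneg (x - y)]
    rw [hsplit]
    set E := Real.exp (s * (x - y)) with hE
    set C := Real.exp (s * y) with hC
    have hEpos : 0 < E := Real.exp_pos _
    have t1 : (x - y) * (C * E - C) = (x - y) * C * (E - 1) := by ring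
    have t2 : (x - y) * C * (E - 1) ≤ (x - y) * C * (s * (x - y) * (E + 1) / 2) :=
      mul_le_mul_of_nonneg_left hsc (mul_nonneg hd hy.le)
    have t3 : (x - y) * C * (s * (x - y) * (E + 1) / 2)
        = s * (x - y) ^ 2 * (C * (E + 1) / 2) := by ring
    have t4 : s * (x - y) ^ 2 * (C * (E + 1) / 2)
        ≤ s * (2 * B) ^ 2 * (C * (E + 1) / 2) := by
      apply mul_le_mul_of_nonneg_right
      · have : (x - y) ^ 2 ≤ (2 * B) ^ 2 := by nlinarith
        nlinarith
      · positivity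
    have t5 : s * (2 * B) ^ 2 * (C * (E + 1) / 2) = 2 * s * B ^ 2 * (C * E + C) := by ring
    linarith
  rcases le_total b a with h | h
  · exact core a b h hab
  · have := core b a h (by rwa [abs_sub_comm] at hab)
    nlinarith [this]

lemma card_filter_lt (n k : ℕ) (hkn : k ≤ n) :
    (Finset.univ.filter (fun i : Fin n => (i : ℕ) < k)).card = k := by
  have : (Finset.univ.filter (fun i : Fin n => (i : ℕ) < k))
      = Finset.univ.map (Fin.castLEEmb hkn) := by
    ext i
    simp only [mem_filter, mem_univ, true_and, Finset.mem_map]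
    constructor
    · intro hi; exact ⟨⟨i, hi⟩, by simp [Fin.castLEEmb, Fin.ext_iff]⟩
    · rintro ⟨j, rfl⟩; simpa using j.isLt
  rw [this, Finset.card_map, Finset.card_univ, Fintype.card_fin]

lemma Wstat_swap (n k : ℕ) (ε : Fin n → ℝ) (p : Equiv.Perm (Fin n)) (i j : Fin n)
    (hi : (i : ℕ) < k) (hj : ¬ (j : ℕ) < k) :
    Wstat n k ε (p * Equiv.swap i j) = Wstat n k ε p - ε (p i) + ε (p j) := by
  have hij : i ≠ j := fun h => hj (h ▸ hi)
  have htot : ∑ x, ε ((p * Equiv.swap i j) x) = ∑ x, ε (p x) := by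
    exact Fintype.sum_equiv (Equiv.swap i j) _ _ (fun x => rfl)
  have hiS : i ∈ Finset.univ.filter (fun i : Fin n => (i : ℕ) < k) := by simp [hi]
  have hpart : ∑ x ∈ Finset.univ.filter (fun i : Fin n => (i : ℕ) < k),
      ε ((p * Equiv.swap i j) x)
      = (∑ x ∈ Finset.univ.filter (fun i : Fin n => (i : ℕ) < k), ε (p x)) - ε (p i) + ε (p j) := by
    rw [← Finset.sum_erase_add _ _ hiS, ← Finset.sum_erase_add _ _ hiS]
    have h1 : ∀ x ∈ (Finset.univ.filter (fun i : Fin n => (i : ℕ) < k)).erase i,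
        ε ((p * Equiv.swap i j) x) = ε (p x) := by
      intro x hx
      have hxi : x ≠ i := Finset.ne_of_mem_erase hx
      have hxj : x ≠ j := by
        intro h; apply hj
        have := Finset.mem_of_mem_erase hx
        simp only [mem_filter] at this
        exact h ▸ this.2
      simp [Equiv.Perm.mul_apply, Equiv.swap_apply_of_ne_of_ne hxi hxj]
    rw [Finset.sum_congr rfl h1]
    simp only [Equiv.Perm.mul_apply, Equiv.swap_apply_left]
    ring
  simp only [Wstat, htot, hpart]
  ring

lemma pair_sum (n k : ℕ) (hn : 0 < n) (hkn : k ≤ n) (ε : Fin n → ℝ) (p : Equiv.Perm (Fin n)) :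
    ∑ q ∈ (Finset.univ.filter (fun i : Fin n => (i : ℕ) < k)) ×ˢ
        (Finset.univ.filter (fun i : Fin n => ¬ (i : ℕ) < k)),
      (ε (p q.1) - ε (p q.2)) = (n : ℝ) * Wstat n k ε p := by
  set S := Finset.univ.filter (fun i : Fin n => (i : ℕ) < k) with hS
  set J := Finset.univ.filter (fun i : Fin n => ¬ (i : ℕ) < k) with hJ
  have hcardS : S.card = k := card_filter_lt n k hkn
  have hcardJ : J.card = n - k := by
    have h := Finset.card_filter_add_card_filter_not (s := (Finset.univ : Finset (Fin n)))
      (p := fun i : Fin n => (i : ℕ) < k)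
    rw [Finset.card_univ, Fintype.card_fin] at h
    have h2 : S.card + J.card = n := by simpa [hS, hJ] using h
    omega
  have hsplit : (∑ x ∈ S, ε (p x)) + (∑ x ∈ J, ε (p x)) = ∑ x, ε (p x) :=
    Finset.sum_filter_add_sum_filter_not _ _ _
  rw [Finset.sum_product]
  have : ∀ i ∈ S, ∑ j ∈ J, (ε (p i) - ε (p j))
      = (J.card : ℝ) * ε (p i) - ∑ j ∈ J, ε (p j) := by
    intro i _
    rw [Finset.sum_sub_distrib, Finset.sum_const, nsmul_eq_mul]
  rw [Finset.sum_congr rfl this, Finset.sum_sub_distrib, Finset.sum_const, nsmul_eq_mul,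
    ← Finset.mul_sum]
  rw [Wstat]
  have hn' : (n : ℝ) ≠ 0 := Nat.cast_ne_zero.mpr hn.ne'
  have hcast : ((n - k : ℕ) : ℝ) = (n : ℝ) - (k : ℝ) := by
    push_cast [hkn]; ring
  rw [hcardS, hcardJ, hcast]
  have hT : ∑ x ∈ J, ε (p x) = (∑ x, ε (p x)) - ∑ x ∈ S, ε (p x) := by linarith
  rw [hT]
  field_simp
  ring

lemma sum_perm_mul (n : ℕ) (σ : Equiv.Perm (Fin n)) (F : Equiv.Perm (Fin n) → ℝ) :
    ∑ p : Equiv.Perm (Fin n), F (p * σ) = ∑ p : Equiv.Perm (Fin n), F p :=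
  Fintype.sum_equiv (Equiv.mulRight σ) _ _ (fun _ => rfl)

lemma key_ineq (n k : ℕ) (hn : 0 < n) (hkn : k ≤ n) (B : ℝ) (ε : Fin n → ℝ)
    (hε : ∀ i, |ε i| ≤ B) (s : ℝ) (hs : 0 ≤ s) :
    ∑ p : Equiv.Perm (Fin n), Wstat n k ε p * Real.exp (s * Wstat n k ε p)
      ≤ 2 * s * B ^ 2 * k * ∑ p : Equiv.Perm (Fin n), Real.exp (s * Wstat n k ε p) := by
  set W := Wstat n k ε with hW
  set E := fun p : Equiv.Perm (Fin n) => Real.exp (s * W p) with hE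
  set S := Finset.univ.filter (fun i : Fin n => (i : ℕ) < k) with hS
  set J := Finset.univ.filter (fun i : Fin n => ¬ (i : ℕ) < k) with hJ
  -- the double sum identity
  have hD : ∀ p : Equiv.Perm (Fin n),
      ∑ q ∈ S ×ˢ J, (W p - W (p * Equiv.swap q.1 q.2)) * E p = (n : ℝ) * W p * E p := by
    intro p
    have h1 : ∀ q ∈ S ×ˢ J, (W p - W (p * Equiv.swap q.1 q.2)) * E p
        = (ε (p q.1) - ε (p q.2)) * E p := by
      rintro ⟨i, j⟩ hq
      rw [Finset.mem_product] at hq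
      obtain ⟨hi, hj⟩ := hq
      rw [hS, Finset.mem_filter] at hi
      rw [hJ, Finset.mem_filter] at hj
      rw [hW, Wstat_swap n k ε p i j hi.2 hj.2]
      ring_nf
    rw [Finset.sum_congr rfl h1, ← Finset.sum_mul, pair_sum n k hn hkn ε p]
  -- per-pair symmetrization and bound
  have hA : ∀ q ∈ S ×ˢ J,
      2 * ∑ p : Equiv.Perm (Fin n), (W p - W (p * Equiv.swap q.1 q.2)) * E p
        ≤ 4 * s * B ^ 2 * ∑ p : Equiv.Perm (Fin n), E p := by
    rintro ⟨i, j⟩ hq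
    rw [Finset.mem_product] at hq
    obtain ⟨hi, hj⟩ := hq
    rw [hS, Finset.mem_filter] at hi
    rw [hJ, Finset.mem_filter] at hj
    set σ := Equiv.swap i j with hσ
    have hσσ : ∀ p : Equiv.Perm (Fin n), p * σ * σ = p := by
      intro p
      rw [mul_assoc, hσ, Equiv.swap_mul_self, mul_one]
    have hre : ∑ p : Equiv.Perm (Fin n), (W p - W (p * σ)) * E p
        = ∑ p : Equiv.Perm (Fin n), (W (p * σ) - W p) * E (p * σ) := by
      conv_lhs => rw [← sum_perm_mul n σ (fun p => (W p - W (p * σ)) * E p)]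
      refine Finset.sum_congr rfl (fun p _ => ?_)
      rw [hσσ p]
    have h2 : 2 * ∑ p : Equiv.Perm (Fin n), (W p - W (p * σ)) * E p
        = ∑ p : Equiv.Perm (Fin n), (W p - W (p * σ)) * (E p - E (p * σ)) := by
      rw [two_mul]
      nth_rewrite 1 [hre]
      rw [← Finset.sum_add_distrib]
      refine Finset.sum_congr rfl (fun p _ => ?_)
      ring
    rw [h2]
    have hbound : ∀ p : Equiv.Perm (Fin n), (W p - W (p * σ)) * (E p - E (p * σ))
        ≤ 2 * s * B ^ 2 * (E p + E (p * σ)) := by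
      intro p
      have hsw : W (p * σ) = W p - ε (p i) + ε (p j) :=
        Wstat_swap n k ε p i j hi.2 hj.2
      have hab : |W p - W (p * σ)| ≤ 2 * B := by
        rw [hsw]
        have h1 := hε (p i)
        have h2 := hε (p j)
        have : W p - (W p - ε (p i) + ε (p j)) = ε (p i) - ε (p j) := by ring
        rw [this]
        calc |ε (p i) - ε (p j)| ≤ |ε (p i)| + |ε (p j)| := abs_sub _ _
          _ ≤ 2 * B := by linarith
      have := pointwise_ineq hs hab
      simpa [hE] using this
    calc ∑ p : Equiv.Perm (Fin n), (W p - W (p * σ)) * (E p - E (p * σ))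
        ≤ ∑ p : Equiv.Perm (Fin n), 2 * s * B ^ 2 * (E p + E (p * σ)) :=
          Finset.sum_le_sum (fun p _ => hbound p)
      _ = 2 * s * B ^ 2 * (∑ p : Equiv.Perm (Fin n), E p
            + ∑ p : Equiv.Perm (Fin n), E (p * σ)) := by
          rw [← Finset.mul_sum, Finset.sum_add_distrib]
      _ = 4 * s * B ^ 2 * ∑ p : Equiv.Perm (Fin n), E p := by
          rw [sum_perm_mul n σ E]; ring
  -- combine
  have hcardS : S.card = k := card_filter_lt n k hkn
  have hpos : (0:ℝ) < ∑ p : Equiv.Perm (Fin n), E p :=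
    Finset.sum_pos (fun p _ => Real.exp_pos _) Finset.univ_nonempty
  have main : 2 * (n : ℝ) * ∑ p : Equiv.Perm (Fin n), W p * E p
      ≤ (S ×ˢ J).card * (4 * s * B ^ 2 * ∑ p : Equiv.Perm (Fin n), E p) := by
    have e1 : (n : ℝ) * ∑ p : Equiv.Perm (Fin n), W p * E p
        = ∑ q ∈ S ×ˢ J, ∑ p : Equiv.Perm (Fin n), (W p - W (p * Equiv.swap q.1 q.2)) * E p := by
      rw [Finset.sum_comm]
      rw [Finset.mul_sum]
      refine Finset.sum_congr rfl (fun p _ => ?_)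
      rw [hD p]; ring
    calc 2 * (n : ℝ) * ∑ p : Equiv.Perm (Fin n), W p * E p
        = ∑ q ∈ S ×ˢ J, 2 * ∑ p : Equiv.Perm (Fin n),
            (W p - W (p * Equiv.swap q.1 q.2)) * E p := by
          rw [← Finset.mul_sum, ← e1]; ring
      _ ≤ ∑ _q ∈ S ×ˢ J, 4 * s * B ^ 2 * ∑ p : Equiv.Perm (Fin n), E p :=
          Finset.sum_le_sum hA
      _ = (S ×ˢ J).card * (4 * s * B ^ 2 * ∑ p : Equiv.Perm (Fin n), E p) := by
          rw [Finset.sum_const, nsmul_eq_mul]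
  have hcard_le : ((S ×ˢ J).card : ℝ) ≤ (k : ℝ) * n := by
    rw [Finset.card_product, hcardS]
    have : J.card ≤ n := by
      calc J.card ≤ (Finset.univ : Finset (Fin n)).card := Finset.card_le_card (Finset.filter_subset _ _)
        _ = n := by rw [Finset.card_univ, Fintype.card_fin]
    push_cast
    have : (J.card : ℝ) ≤ n := by exact_mod_cast this
    nlinarith [Nat.cast_nonneg (α := ℝ) k]
  have hn' : (0:ℝ) < (n : ℝ) := Nat.cast_pos.mpr hn
  have hB2 : 0 ≤ 4 * s * B ^ 2 * ∑ p : Equiv.Perm (Fin n), E p := by positivity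
  have main2 : 2 * (n : ℝ) * ∑ p : Equiv.Perm (Fin n), W p * E p
      ≤ (k : ℝ) * n * (4 * s * B ^ 2 * ∑ p : Equiv.Perm (Fin n), E p) :=
    le_trans main (mul_le_mul_of_nonneg_right hcard_le hB2)
  nlinarith [main2]

lemma mgf_aux (n k : ℕ) (hn : 0 < n) (hk1 : 1 ≤ k) (hkn : k ≤ n) (B : ℝ) (hB0 : 0 ≤ B)
    (ε : Fin n → ℝ) (hε : ∀ i, |ε i| ≤ B) (θ : ℝ) (hθ : 0 ≤ θ) :
    (∑ p : Equiv.Perm (Fin n), Real.exp (θ * Wstat n k ε p / Real.sqrt k))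
        / (Nat.factorial n : ℝ)
      ≤ Real.exp (B ^ 2 * θ ^ 2) := by
  have hk0 : (0:ℝ) < Real.sqrt k := Real.sqrt_pos.mpr (by exact_mod_cast hk1)
  have hsq : Real.sqrt k * Real.sqrt k = (k : ℝ) := Real.mul_self_sqrt (Nat.cast_nonneg k)
  set c : Equiv.Perm (Fin n) → ℝ := fun p => Wstat n k ε p / Real.sqrt k with hc
  set m : ℝ → ℝ := fun t => (∑ p : Equiv.Perm (Fin n), Real.exp (c p * t)) / (Nat.factorial n : ℝ)
    with hm
  have hfac : (0:ℝ) < (Nat.factorial n : ℝ) := by exact_mod_cast Nat.factorial_pos n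
  -- derivative of m
  have hm' : ∀ t : ℝ, HasDerivAt m
      ((∑ p : Equiv.Perm (Fin n), c p * Real.exp (c p * t)) / (Nat.factorial n : ℝ)) t := by
    intro t
    have h1 : ∀ p : Equiv.Perm (Fin n), HasDerivAt (fun t => Real.exp (c p * t))
        (c p * Real.exp (c p * t)) t := by
      intro p
      have := ((hasDerivAt_id t).const_mul (c p)).exp
      simpa [mul_comm] using this
    have := HasDerivAt.fun_sum (fun p (_ : p ∈ Finset.univ) => h1 p)
    exact this.div_const _
  -- the differential inequality
  have hdiff : ∀ t : ℝ, 0 ≤ t →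
      (∑ p : Equiv.Perm (Fin n), c p * Real.exp (c p * t)) / (Nat.factorial n : ℝ)
        ≤ 2 * B ^ 2 * t * m t := by
    intro t ht
    have hs0 : 0 ≤ t / Real.sqrt k := div_nonneg ht hk0.le
    have hkey := key_ineq n k hn hkn B ε hε (t / Real.sqrt k) hs0
    have harg : ∀ p : Equiv.Perm (Fin n), c p * t = (t / Real.sqrt k) * Wstat n k ε p := by
      intro p; rw [hc]; field_simp
    have hL : ∑ p : Equiv.Perm (Fin n), c p * Real.exp (c p * t)
        = (Real.sqrt k)⁻¹ * ∑ p : Equiv.Perm (Fin n),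
            Wstat n k ε p * Real.exp ((t / Real.sqrt k) * Wstat n k ε p) := by
      rw [Finset.mul_sum]
      refine Finset.sum_congr rfl (fun p _ => ?_)
      rw [harg p, hc]
      field_simp
    have hR : ∑ p : Equiv.Perm (Fin n), Real.exp ((t / Real.sqrt k) * Wstat n k ε p)
        = ∑ p : Equiv.Perm (Fin n), Real.exp (c p * t) := by
      refine Finset.sum_congr rfl (fun p _ => ?_)
      rw [harg p]
    rw [hL]
    rw [hR] at hkey
    have hfactor : (Real.sqrt k)⁻¹ * (2 * (t / Real.sqrt k) * B ^ 2 * k)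
        = 2 * B ^ 2 * t := by
      field_simp
      rw [Real.sq_sqrt (Nat.cast_nonneg _)]; ring
    have step : (Real.sqrt k)⁻¹ * ∑ p : Equiv.Perm (Fin n),
          Wstat n k ε p * Real.exp (c p * t)
        ≤ (Real.sqrt k)⁻¹ * (2 * (t / Real.sqrt k) * B ^ 2 * (k : ℝ) *
            ∑ p : Equiv.Perm (Fin n), Real.exp (c p * t)) := by
      apply mul_le_mul_of_nonneg_left _ (by positivity)
      calc ∑ p : Equiv.Perm (Fin n), Wstat n k ε p * Real.exp (c p * t)
          = ∑ p : Equiv.Perm (Fin n), Wstat n k ε p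
              * Real.exp ((t / Real.sqrt k) * Wstat n k ε p) := by
            refine Finset.sum_congr rfl (fun p _ => ?_); rw [harg p]
        _ ≤ 2 * (t / Real.sqrt k) * B ^ 2 * (k : ℝ) *
              ∑ p : Equiv.Perm (Fin n), Real.exp (c p * t) := hkey
    have step2 : (Real.sqrt k)⁻¹ * ∑ p : Equiv.Perm (Fin n),
          Wstat n k ε p * Real.exp ((t / Real.sqrt k) * Wstat n k ε p)
        ≤ 2 * B ^ 2 * t * ∑ p : Equiv.Perm (Fin n), Real.exp (c p * t) := by
      have e1 : ∑ p : Equiv.Perm (Fin n), Wstat n k ε p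
            * Real.exp ((t / Real.sqrt k) * Wstat n k ε p)
          = ∑ p : Equiv.Perm (Fin n), Wstat n k ε p * Real.exp (c p * t) := by
        refine Finset.sum_congr rfl (fun p _ => ?_); rw [harg p]
      rw [e1]
      calc (Real.sqrt k)⁻¹ * ∑ p : Equiv.Perm (Fin n), Wstat n k ε p * Real.exp (c p * t)
          ≤ (Real.sqrt k)⁻¹ * (2 * (t / Real.sqrt k) * B ^ 2 * (k : ℝ) *
              ∑ p : Equiv.Perm (Fin n), Real.exp (c p * t)) := step
        _ = 2 * B ^ 2 * t * ∑ p : Equiv.Perm (Fin n), Real.exp (c p * t) := by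
            rw [← mul_assoc, hfactor]
    rw [hm]
    rw [div_le_iff₀ hfac] at *
    calc (Real.sqrt k)⁻¹ * ∑ p : Equiv.Perm (Fin n),
          Wstat n k ε p * Real.exp ((t / Real.sqrt k) * Wstat n k ε p)
        ≤ 2 * B ^ 2 * t * ∑ p : Equiv.Perm (Fin n), Real.exp (c p * t) := step2
      _ = 2 * B ^ 2 * t * ((∑ p : Equiv.Perm (Fin n), Real.exp (c p * t))
            / (Nat.factorial n : ℝ)) * (Nat.factorial n : ℝ) := by
          field_simp
  -- Gronwall argument
  set F : ℝ → ℝ := fun t => m t * Real.exp (-(B ^ 2) * t ^ 2) with hF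
  have hF' : ∀ t : ℝ, HasDerivAt F
      ((∑ p : Equiv.Perm (Fin n), c p * Real.exp (c p * t)) / (Nat.factorial n : ℝ)
          * Real.exp (-(B ^ 2) * t ^ 2)
        + m t * (Real.exp (-(B ^ 2) * t ^ 2) * (-(B ^ 2) * (2 * t ^ 1)))) t := by
    intro t
    exact (hm' t).mul (((hasDerivAt_pow 2 t).const_mul (-(B ^ 2))).exp)
  have hFdiff : Differentiable ℝ F := fun t => (hF' t).differentiableAt
  have hanti : AntitoneOn F (Set.Icc 0 θ) := by
    apply antitoneOn_of_deriv_nonpos (convex_Icc 0 θ)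
      hFdiff.continuous.continuousOn hFdiff.differentiableOn
    intro t ht
    rw [interior_Icc, Set.mem_Ioo] at ht
    rw [(hF' t).deriv]
    have hd := hdiff t ht.1.le
    have he : (0:ℝ) < Real.exp (-(B ^ 2) * t ^ 2) := Real.exp_pos _
    have hmt : 0 ≤ m t := by
      rw [hm]
      positivity
    have ht1 : t ^ 1 = t := pow_one t
    rw [ht1]
    nlinarith [hd, he, hmt, mul_le_mul_of_nonneg_right hd he.le]
  have hm0 : m 0 = 1 := by
    show (∑ p : Equiv.Perm (Fin n), Real.exp (c p * 0)) / (Nat.factorial n : ℝ) = 1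
    have : ∀ p : Equiv.Perm (Fin n), Real.exp (c p * 0) = 1 := by
      intro p; rw [mul_zero, Real.exp_zero]
    rw [Finset.sum_congr rfl (fun p _ => this p), Finset.sum_const, Finset.card_univ,
      Fintype.card_perm, Fintype.card_fin, nsmul_eq_mul, mul_one, div_self hfac.ne']
  have hFθ : F θ ≤ F 0 := hanti ⟨le_refl 0, hθ⟩ ⟨hθ, le_refl θ⟩ hθ
  have hmθ : m θ * Real.exp (-(B ^ 2) * θ ^ 2) ≤ 1 := by
    have h : m θ * Real.exp (-(B ^ 2) * θ ^ 2) ≤ m 0 * Real.exp (-(B ^ 2) * 0 ^ 2) := hFθ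
    rw [hm0] at h
    simpa using h
  have hgoal : m θ ≤ Real.exp (B ^ 2 * θ ^ 2) := by
    have hmul : Real.exp (-(B ^ 2) * θ ^ 2) * Real.exp (B ^ 2 * θ ^ 2) = 1 := by
      rw [← Real.exp_add]; ring_nf; exact Real.exp_zero
    nlinarith [Real.exp_pos (B ^ 2 * θ ^ 2), Real.exp_pos (-(B ^ 2) * θ ^ 2), hmθ]
  have hsum : ∑ p : Equiv.Perm (Fin n), Real.exp (θ * Wstat n k ε p / Real.sqrt k)
      = ∑ p : Equiv.Perm (Fin n), Real.exp (c p * θ) := by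
    refine Finset.sum_congr rfl (fun p _ => ?_)
    rw [hc]
    congr 1
    ring
  rw [hsum]
  exact hgoal

/-- For `ε₁,...,εₙ` taking values in a finite set `𝒜`, `B = max_{a ∈ 𝒜} |a|`, a uniform
random permutation `π`, and `W_k = Σ_{i ≤ k} ε_{π(i)} − (k/n) Σᵢ ε_{π(i)}`, one has
`E[exp(θ W_k/√k)] ≤ exp(B² θ²)` for all `θ ∈ ℝ` and `1 ≤ k ≤ n`. -/
theorem mgf_Wk_bound (n : ℕ) (hn : 0 < n) (𝒜 : Finset ℝ) (h𝒜 : 𝒜.Nonempty)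
    (ε : Fin n → ℝ) (hε : ∀ i, ε i ∈ 𝒜) (B : ℝ) (hB : B = 𝒜.sup' h𝒜 fun a => |a|)
    (θ : ℝ) (k : ℕ) (hk1 : 1 ≤ k) (hkn : k ≤ n) :
    (∑ π : Equiv.Perm (Fin n), Real.exp (θ *
        ((∑ i ∈ Finset.univ.filter (fun i : Fin n => (i : ℕ) < k), ε (π i))
          - (k / n : ℝ) * ∑ i, ε (π i)) / Real.sqrt k))
        / (Nat.factorial n : ℝ)
      ≤ Real.exp (B ^ 2 * θ ^ 2) := by
  have hεB : ∀ i, |ε i| ≤ B := by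
    intro i; rw [hB]; exact Finset.le_sup' (fun a => |a|) (hε i)
  have hB0 : 0 ≤ B := le_trans (abs_nonneg _) (hεB ⟨0, hn⟩)
  rcases le_total 0 θ with hθ | hθ
  · exact mgf_aux n k hn hk1 hkn B hB0 ε hεB θ hθ
  · have h := mgf_aux n k hn hk1 hkn B hB0 (fun i => -ε i)
      (fun i => by simpa using hεB i) (-θ) (by linarith)
    rw [neg_sq] at h
    refine le_trans (le_of_eq ?_) h
    have key : ∀ p : Equiv.Perm (Fin n), Real.exp (θ *
        ((∑ i ∈ Finset.univ.filter (fun i : Fin n => (i : ℕ) < k), ε (p i))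
          - (k / n : ℝ) * ∑ i, ε (p i)) / Real.sqrt k)
        = Real.exp (-θ * Wstat n k (fun i => -ε i) p / Real.sqrt k) := by
      intro p
      congr 1
      simp only [Wstat, Finset.sum_neg_distrib]
      ring
    rw [Finset.sum_congr rfl (fun p _ => key p)]
end

section
/- Let ε₁,...,εₙ be elements of a finite set 𝒜 ⊂ ℝ, π a uniform random permutation of {1,...,n}, d ≥ 0, and define W_{k,d} = (1/n) Σ_{i=1}^k Σ_{j=k+1}^n (ε_{π(i)} − ε_{π(j)}) 1(|ε_{π(i)} − ε_{π(j)}| = d). Then for all θ ∈ ℝ and 1 ≤ k ≤ n, E[exp(θ W_{k,d}/√k)] ≤ exp(d² θ²/2). -/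
open Finset


private lemma sinh_core (u : ℝ) (hu : 0 ≤ u) :
    Real.exp u - Real.exp (-u) ≤ u * (Real.exp u + Real.exp (-u)) := by
  have hderiv : ∀ v : ℝ, HasDerivAt
      (fun w : ℝ => w * (Real.exp w + Real.exp (-w)) - (Real.exp w - Real.exp (-w)))
      (v * (Real.exp v - Real.exp (-v))) v := by
    intro v
    have h1 : HasDerivAt (fun w : ℝ => Real.exp w) (Real.exp v) v := Real.hasDerivAt_exp v
    have h2 : HasDerivAt (fun w : ℝ => Real.exp (-w)) (-Real.exp (-v)) v := by
      exact ((Real.hasDerivAt_exp (-v)).comp v (hasDerivAt_neg v)).congr_deriv (by ring)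
    have h3 := ((hasDerivAt_id v).mul (h1.add h2)).sub (h1.sub h2)
    refine h3.congr_deriv ?_
    simp only [id_eq, Pi.add_apply]
    ring
  have hmono : Monotone
      (fun w : ℝ => w * (Real.exp w + Real.exp (-w)) - (Real.exp w - Real.exp (-w))) := by
    apply monotone_of_deriv_nonneg
    · exact fun v => (hderiv v).differentiableAt
    · intro v
      rw [(hderiv v).deriv]
      rcases le_or_gt 0 v with h | h
      · have : Real.exp (-v) ≤ Real.exp v := Real.exp_le_exp.mpr (by linarith)
        nlinarith
      · have : Real.exp v ≤ Real.exp (-v) := Real.exp_le_exp.mpr (by linarith)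
        nlinarith
  have h0 := hmono hu
  simp only [zero_mul, neg_zero, Real.exp_zero, zero_sub, sub_self] at h0
  linarith

private lemma exp_sub_le_of_le {x y : ℝ} (h : y ≤ x) :
    Real.exp x - Real.exp y ≤ (x - y) * (Real.exp x + Real.exp y) / 2 := by
  have hu : 0 ≤ (x - y) / 2 := by linarith
  have e1 : Real.exp x = Real.exp ((x + y) / 2) * Real.exp ((x - y) / 2) := by
    rw [← Real.exp_add]; congr 1; ring
  have e2 : Real.exp y = Real.exp ((x + y) / 2) * Real.exp (-((x - y) / 2)) := by
    rw [← Real.exp_add]; congr 1; ring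
  have hp : (0:ℝ) < Real.exp ((x + y) / 2) := Real.exp_pos _
  have hc := sinh_core ((x - y) / 2) hu
  rw [e1, e2]
  nlinarith [mul_le_mul_of_nonneg_left hc hp.le]

private lemma abs_exp_sub_le (x y : ℝ) :
    |Real.exp x - Real.exp y| ≤ |x - y| * (Real.exp x + Real.exp y) / 2 := by
  rcases le_total y x with h | h
  · rw [abs_of_nonneg (by linarith [Real.exp_le_exp.mpr h]),
      abs_of_nonneg (by linarith : (0:ℝ) ≤ x - y)]
    exact exp_sub_le_of_le h
  · rw [abs_sub_comm, abs_sub_comm x y,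
      abs_of_nonneg (by linarith [Real.exp_le_exp.mpr h]),
      abs_of_nonneg (by linarith : (0:ℝ) ≤ y - x)]
    have := exp_sub_le_of_le h
    linarith


private noncomputable def auxG {n : ℕ} (A B : Finset (Fin n)) (g : ℝ → ℝ → ℝ)
    (e : Fin n → ℝ) : ℝ :=
  ∑ i ∈ A, ∑ j ∈ B, g (e i) (e j)

private lemma auxG_swap_diff {n : ℕ} {A B : Finset (Fin n)} (hAB : Disjoint A B)
    {g : ℝ → ℝ → ℝ} (hg : ∀ x y, g y x = - g x y)
    (e : Fin n → ℝ) {i j : Fin n} (hi : i ∈ A) (hj : j ∈ B) :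
    auxG A B g e - auxG A B g (e ∘ Equiv.swap i j) =
      (∑ b ∈ B, (g (e i) (e b) - g (e j) (e b)))
      + (∑ a ∈ A, (g (e a) (e j) - g (e a) (e i))) := by
  classical
  have hij : i ≠ j := fun h => Finset.disjoint_left.mp hAB hi (h ▸ hj)
  have key : ∀ f : Fin n → Fin n → ℝ, (∑ a ∈ A, ∑ b ∈ B, f a b)
      = f i j + (∑ b ∈ B.erase j, f i b) + (∑ a ∈ A.erase i, f a j)
        + ∑ a ∈ A.erase i, ∑ b ∈ B.erase j, f a b := by
    intro f
    rw [← Finset.add_sum_erase A _ hi]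
    have h1 : ∑ b ∈ B, f i b = f i j + ∑ b ∈ B.erase j, f i b :=
      (Finset.add_sum_erase B _ hj).symm
    have h2 : ∀ a, ∑ b ∈ B, f a b = f a j + ∑ b ∈ B.erase j, f a b :=
      fun a => (Finset.add_sum_erase B _ hj).symm
    rw [h1, Finset.sum_congr rfl (fun a _ => h2 a), Finset.sum_add_distrib]
    ring
  have hsA : ∀ a ∈ A.erase i, Equiv.swap i j a = a := by
    intro a ha
    rcases Finset.mem_erase.mp ha with ⟨hai, haA⟩
    exact Equiv.swap_apply_of_ne_of_ne hai (fun h => Finset.disjoint_left.mp hAB haA (h ▸ hj))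
  have hsB : ∀ b ∈ B.erase j, Equiv.swap i j b = b := by
    intro b hb
    rcases Finset.mem_erase.mp hb with ⟨hbj, hbB⟩
    exact Equiv.swap_apply_of_ne_of_ne
      (fun h => Finset.disjoint_left.mp hAB (h ▸ hi) hbB) hbj
  have hgi : g (e i) (e i) = 0 := by have := hg (e i) (e i); linarith
  have hgj : g (e j) (e j) = 0 := by have := hg (e j) (e j); linarith
  have hL := key (fun a b => g (e a) (e b))
  have hR := key (fun a b => g (e ((Equiv.swap i j) a)) (e ((Equiv.swap i j) b)))
  have hRs : auxG A B g (e ∘ Equiv.swap i j)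
      = g (e j) (e i) + (∑ b ∈ B.erase j, g (e j) (e b))
        + (∑ a ∈ A.erase i, g (e a) (e i))
        + ∑ a ∈ A.erase i, ∑ b ∈ B.erase j, g (e a) (e b) := by
    rw [show auxG A B g (e ∘ Equiv.swap i j)
        = ∑ a ∈ A, ∑ b ∈ B, g (e ((Equiv.swap i j) a)) (e ((Equiv.swap i j) b)) from rfl, hR]
    rw [Equiv.swap_apply_left, Equiv.swap_apply_right]
    congr 1
    · congr 1
      · congr 1
        · exact Finset.sum_congr rfl fun b hb => by rw [hsB b hb]
      · exact Finset.sum_congr rfl fun a ha => by rw [hsA a ha]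
    · exact Finset.sum_congr rfl fun a ha => Finset.sum_congr rfl fun b hb => by
        rw [hsA a ha, hsB b hb]
  have hB1 : ∑ b ∈ B, (g (e i) (e b) - g (e j) (e b))
      = (g (e i) (e j) - g (e j) (e j))
        + ∑ b ∈ B.erase j, (g (e i) (e b) - g (e j) (e b)) :=
    (Finset.add_sum_erase B _ hj).symm
  have hA1 : ∑ a ∈ A, (g (e a) (e j) - g (e a) (e i))
      = (g (e i) (e j) - g (e i) (e i))
        + ∑ a ∈ A.erase i, (g (e a) (e j) - g (e a) (e i)) :=
    (Finset.add_sum_erase A _ hi).symm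
  have hgji : g (e j) (e i) = - g (e i) (e j) := hg _ _
  rw [show auxG A B g e = ∑ a ∈ A, ∑ b ∈ B, g (e a) (e b) from rfl, hL, hRs, hB1, hA1,
    Finset.sum_sub_distrib, Finset.sum_sub_distrib]
  rw [hgi, hgj, hgji]
  ring


private lemma sum_sub_pair {α : Type*} (A B : Finset α) (φ : α → ℝ) :
    ∑ i ∈ A, ∑ j ∈ B, (φ i - φ j)
      = (B.card : ℝ) * (∑ i ∈ A, φ i) - (A.card : ℝ) * (∑ j ∈ B, φ j) := by
  simp only [Finset.sum_sub_distrib, Finset.sum_const, nsmul_eq_mul]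
  rw [← Finset.mul_sum]

private lemma sum_sub_pair_sq {α : Type*} (A B : Finset α) (φ : α → ℝ) :
    ∑ i ∈ A, ∑ j ∈ B, (φ i - φ j)^2
      = (B.card : ℝ) * (∑ i ∈ A, (φ i)^2) + (A.card : ℝ) * (∑ j ∈ B, (φ j)^2)
        - 2 * ((∑ i ∈ A, φ i) * (∑ j ∈ B, φ j)) := by
  have expand : ∀ i j : α, (φ i - φ j)^2 = (φ i)^2 - 2 * (φ i * φ j) + (φ j)^2 :=
    fun i j => by ring
  simp only [expand, Finset.sum_add_distrib, Finset.sum_sub_distrib, Finset.sum_const,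
    nsmul_eq_mul]
  have hc : ∑ x ∈ A, ∑ y ∈ B, 2 * (φ x * φ y)
      = 2 * ((∑ i ∈ A, φ i) * ∑ j ∈ B, φ j) := by
    simp only [← Finset.mul_sum]
    rw [← Finset.sum_mul]
  rw [hc, ← Finset.mul_sum]
  ring


private lemma auxG_def {n : ℕ} (A B : Finset (Fin n)) (g : ℝ → ℝ → ℝ) (e : Fin n → ℝ) :
    auxG A B g e = ∑ i ∈ A, ∑ j ∈ B, g (e i) (e j) := rfl

private lemma sum_antisym_zero {n : ℕ} (S : Finset (Fin n)) {g : ℝ → ℝ → ℝ}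
    (hg : ∀ x y, g y x = - g x y) (e : Fin n → ℝ) :
    ∑ a ∈ S, ∑ b ∈ S, g (e a) (e b) = 0 := by
  have h : (∑ a ∈ S, ∑ b ∈ S, g (e a) (e b))
      = - ∑ a ∈ S, ∑ b ∈ S, g (e a) (e b) := by
    conv_lhs => rw [Finset.sum_comm]
    rw [← Finset.sum_neg_distrib]
    refine Finset.sum_congr rfl fun a _ => ?_
    rw [← Finset.sum_neg_distrib]
    exact Finset.sum_congr rfl fun b _ => hg _ _
  linarith

private lemma diff_eq_phi {n : ℕ} {A B : Finset (Fin n)} (hAB : Disjoint A B)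
    {g : ℝ → ℝ → ℝ} (hg : ∀ x y, g y x = - g x y)
    (e : Fin n → ℝ) {i j : Fin n} (hi : i ∈ A) (hj : j ∈ B) :
    auxG A B g e - auxG A B g (e ∘ Equiv.swap i j) =
      ((∑ b ∈ B, g (e i) (e b)) - ∑ a ∈ A, g (e a) (e i))
      - ((∑ b ∈ B, g (e j) (e b)) - ∑ a ∈ A, g (e a) (e j)) := by
  rw [auxG_swap_diff hAB hg e hi hj, Finset.sum_sub_distrib, Finset.sum_sub_distrib]
  ring

private lemma phi_sum_A {n : ℕ} (A B : Finset (Fin n))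
    {g : ℝ → ℝ → ℝ} (hg : ∀ x y, g y x = - g x y) (e : Fin n → ℝ) :
    ∑ i ∈ A, ((∑ b ∈ B, g (e i) (e b)) - ∑ a ∈ A, g (e a) (e i))
      = auxG A B g e := by
  rw [Finset.sum_sub_distrib]
  have z : ∑ x ∈ A, ∑ a ∈ A, g (e a) (e x) = 0 := by
    rw [Finset.sum_comm]; exact sum_antisym_zero A hg e
  rw [z, auxG_def]; ring

private lemma phi_sum_B {n : ℕ} (A B : Finset (Fin n))
    {g : ℝ → ℝ → ℝ} (hg : ∀ x y, g y x = - g x y) (e : Fin n → ℝ) :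
    ∑ j ∈ B, ((∑ b ∈ B, g (e j) (e b)) - ∑ a ∈ A, g (e a) (e j))
      = - auxG A B g e := by
  rw [Finset.sum_sub_distrib, sum_antisym_zero B hg e]
  rw [Finset.sum_comm, auxG_def]; ring

private lemma sum_diff_identity {n : ℕ} {A B : Finset (Fin n)} (hAB : Disjoint A B)
    (hcard : A.card + B.card = n)
    {g : ℝ → ℝ → ℝ} (hg : ∀ x y, g y x = - g x y) (e : Fin n → ℝ) :
    ∑ i ∈ A, ∑ j ∈ B, (auxG A B g e - auxG A B g (e ∘ Equiv.swap i j))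
      = n * auxG A B g e := by
  have h1 : ∑ i ∈ A, ∑ j ∈ B, (auxG A B g e - auxG A B g (e ∘ Equiv.swap i j))
      = ∑ i ∈ A, ∑ j ∈ B,
        (((∑ b ∈ B, g (e i) (e b)) - ∑ a ∈ A, g (e a) (e i))
          - ((∑ b ∈ B, g (e j) (e b)) - ∑ a ∈ A, g (e a) (e j))) :=
    Finset.sum_congr rfl fun i hi => Finset.sum_congr rfl fun j hj =>
      diff_eq_phi hAB hg e hi hj
  rw [h1, sum_sub_pair A B (fun x => (∑ b ∈ B, g (e x) (e b)) - ∑ a ∈ A, g (e a) (e x)),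
    phi_sum_A A B hg e, phi_sum_B A B hg e]
  have hc : (A.card : ℝ) + (B.card : ℝ) = (n : ℝ) := by exact_mod_cast hcard
  linear_combination (auxG A B g e) * hc

private lemma sum_sq_bound {n k : ℕ} {A B : Finset (Fin n)} (hAB : Disjoint A B)
    (hA : A.card = k) (hB : B.card = n - k) (hkn : k ≤ n)
    {g : ℝ → ℝ → ℝ} (hg : ∀ x y, g y x = - g x y) {d : ℝ} (hd : 0 ≤ d)
    (hgb : ∀ x y, |g x y| ≤ d) (e : Fin n → ℝ) :
    ∑ i ∈ A, ∑ j ∈ B, (auxG A B g e - auxG A B g (e ∘ Equiv.swap i j))^2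
      ≤ 2 * (n:ℝ)^3 * k * d^2 := by
  have hx : (B.card : ℝ) = (n : ℝ) - (k : ℝ) := by
    rw [hB]; push_cast [hkn]; ring
  have hkn' : (k:ℝ) ≤ (n:ℝ) := by exact_mod_cast hkn
  have hk0 : (0:ℝ) ≤ (k:ℝ) := by positivity
  have hφbound : ∀ x : Fin n,
      |(∑ b ∈ B, g (e x) (e b)) - ∑ a ∈ A, g (e a) (e x)| ≤ (n : ℝ) * d := by
    intro x
    have h1 : |∑ b ∈ B, g (e x) (e b)| ≤ (B.card : ℝ) * d := by
      calc |∑ b ∈ B, g (e x) (e b)| ≤ ∑ b ∈ B, |g (e x) (e b)| :=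
            Finset.abs_sum_le_sum_abs _ _
        _ ≤ ∑ _b ∈ B, d := Finset.sum_le_sum fun b _ => hgb _ _
        _ = (B.card : ℝ) * d := by rw [Finset.sum_const, nsmul_eq_mul]
    have h2 : |∑ a ∈ A, g (e a) (e x)| ≤ (A.card : ℝ) * d := by
      calc |∑ a ∈ A, g (e a) (e x)| ≤ ∑ a ∈ A, |g (e a) (e x)| :=
            Finset.abs_sum_le_sum_abs _ _
        _ ≤ ∑ _a ∈ A, d := Finset.sum_le_sum fun a _ => hgb _ _
        _ = (A.card : ℝ) * d := by rw [Finset.sum_const, nsmul_eq_mul]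
    calc |(∑ b ∈ B, g (e x) (e b)) - ∑ a ∈ A, g (e a) (e x)|
        ≤ |∑ b ∈ B, g (e x) (e b)| + |∑ a ∈ A, g (e a) (e x)| := abs_sub _ _
      _ ≤ (B.card : ℝ) * d + (A.card : ℝ) * d := add_le_add h1 h2
      _ ≤ (n : ℝ) * d := by rw [hx, hA]; nlinarith
  have hGbound : |auxG A B g e| ≤ (k : ℝ) * (((n:ℝ) - k) * d) := by
    rw [auxG_def]
    calc |∑ i ∈ A, ∑ j ∈ B, g (e i) (e j)| ≤ ∑ i ∈ A, |∑ j ∈ B, g (e i) (e j)| :=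
          Finset.abs_sum_le_sum_abs _ _
      _ ≤ ∑ _i ∈ A, (B.card : ℝ) * d := by
          refine Finset.sum_le_sum fun i _ => ?_
          calc |∑ j ∈ B, g (e i) (e j)| ≤ ∑ j ∈ B, |g (e i) (e j)| :=
                Finset.abs_sum_le_sum_abs _ _
            _ ≤ ∑ _j ∈ B, d := Finset.sum_le_sum fun j _ => hgb _ _
            _ = (B.card : ℝ) * d := by rw [Finset.sum_const, nsmul_eq_mul]
      _ = (k : ℝ) * (((n:ℝ) - k) * d) := by rw [Finset.sum_const, nsmul_eq_mul, hx, hA]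
  have h1 : ∑ i ∈ A, ∑ j ∈ B, (auxG A B g e - auxG A B g (e ∘ Equiv.swap i j))^2
      = ∑ i ∈ A, ∑ j ∈ B,
        (((∑ b ∈ B, g (e i) (e b)) - ∑ a ∈ A, g (e a) (e i))
          - ((∑ b ∈ B, g (e j) (e b)) - ∑ a ∈ A, g (e a) (e j)))^2 :=
    Finset.sum_congr rfl fun i hi => Finset.sum_congr rfl fun j hj => by
      rw [diff_eq_phi hAB hg e hi hj]
  rw [h1, sum_sub_pair_sq A B (fun x => (∑ b ∈ B, g (e x) (e b)) - ∑ a ∈ A, g (e a) (e x)),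
    phi_sum_A A B hg e, phi_sum_B A B hg e, hx, hA]
  have hsqA : ∑ i ∈ A,
      ((∑ b ∈ B, g (e i) (e b)) - ∑ a ∈ A, g (e a) (e i))^2 ≤ (k : ℝ) * ((n:ℝ) * d)^2 := by
    calc ∑ i ∈ A, ((∑ b ∈ B, g (e i) (e b)) - ∑ a ∈ A, g (e a) (e i))^2
        ≤ ∑ _i ∈ A, ((n:ℝ) * d)^2 := by
          refine Finset.sum_le_sum fun i _ => ?_
          have := hφbound i
          nlinarith [abs_nonneg ((∑ b ∈ B, g (e i) (e b)) - ∑ a ∈ A, g (e a) (e i)),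
            le_abs_self ((∑ b ∈ B, g (e i) (e b)) - ∑ a ∈ A, g (e a) (e i)),
            neg_abs_le ((∑ b ∈ B, g (e i) (e b)) - ∑ a ∈ A, g (e a) (e i))]
      _ = (k : ℝ) * ((n:ℝ) * d)^2 := by rw [Finset.sum_const, nsmul_eq_mul, hA]
  have hsqB : ∑ j ∈ B,
      ((∑ b ∈ B, g (e j) (e b)) - ∑ a ∈ A, g (e a) (e j))^2
        ≤ ((n:ℝ) - k) * ((n:ℝ) * d)^2 := by
    calc ∑ j ∈ B, ((∑ b ∈ B, g (e j) (e b)) - ∑ a ∈ A, g (e a) (e j))^2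
        ≤ ∑ _j ∈ B, ((n:ℝ) * d)^2 := by
          refine Finset.sum_le_sum fun j _ => ?_
          have := hφbound j
          nlinarith [abs_nonneg ((∑ b ∈ B, g (e j) (e b)) - ∑ a ∈ A, g (e a) (e j)),
            le_abs_self ((∑ b ∈ B, g (e j) (e b)) - ∑ a ∈ A, g (e a) (e j)),
            neg_abs_le ((∑ b ∈ B, g (e j) (e b)) - ∑ a ∈ A, g (e a) (e j))]
      _ = ((n:ℝ) - k) * ((n:ℝ) * d)^2 := by rw [Finset.sum_const, nsmul_eq_mul, hx]
  have hG2 : (auxG A B g e)^2 ≤ ((k:ℝ) * (((n:ℝ) - k) * d))^2 := by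
    nlinarith [abs_nonneg (auxG A B g e), le_abs_self (auxG A B g e),
      neg_abs_le (auxG A B g e)]
  have hb1 : ((n:ℝ) - k) * (∑ i ∈ A,
      ((∑ b ∈ B, g (e i) (e b)) - ∑ a ∈ A, g (e a) (e i))^2)
        ≤ ((n:ℝ) - k) * ((k : ℝ) * ((n:ℝ) * d)^2) :=
    mul_le_mul_of_nonneg_left hsqA (by linarith)
  have hb2 : (k:ℝ) * (∑ j ∈ B,
      ((∑ b ∈ B, g (e j) (e b)) - ∑ a ∈ A, g (e a) (e j))^2)
        ≤ (k:ℝ) * (((n:ℝ) - k) * ((n:ℝ) * d)^2) :=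
    mul_le_mul_of_nonneg_left hsqB hk0
  nlinarith [hb1, hb2, hG2,
    mul_nonneg (mul_nonneg (mul_nonneg hk0 hk0) hk0)
      (mul_nonneg (by linarith : (0:ℝ) ≤ 2*(n:ℝ) - k) (sq_nonneg d))]


private lemma gronwall_mgf {X : Type*} [Fintype X] (W : X → ℝ) (C : ℝ) (hC : 0 ≤ C)
    (key : ∀ t : ℝ, |∑ x : X, W x * Real.exp (t * W x)|
      ≤ C * |t| * ∑ x : X, Real.exp (t * W x)) (θ : ℝ) :
    ∑ x : X, Real.exp (θ * W x) ≤ (Fintype.card X : ℝ) * Real.exp (C * θ^2 / 2) := by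
  set m : ℝ → ℝ := fun t => ∑ x : X, Real.exp (t * W x) with hm_def
  set m' : ℝ → ℝ := fun t => ∑ x : X, W x * Real.exp (t * W x) with hm'_def
  have hm : ∀ t, HasDerivAt m (m' t) t := by
    intro t
    apply HasDerivAt.fun_sum
    intro x _
    have h1 : HasDerivAt (fun t : ℝ => t * W x) (W x) t := hasDerivAt_mul_const (W x)
    have h2 := (Real.hasDerivAt_exp (t * W x)).comp t h1
    exact h2.congr_deriv (by ring)
  set E : ℝ → ℝ := fun t => Real.exp (-(C/2) * t^2) with hE_def
  set φ : ℝ → ℝ := fun t => m t * E t with hφ_def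
  have hE : ∀ t, HasDerivAt E (E t * (-C * t)) t := by
    intro t
    have hin : HasDerivAt (fun t : ℝ => -(C/2) * t^2) (-C * t) t := by
      have := (hasDerivAt_pow 2 t).const_mul (-(C/2))
      refine this.congr_deriv ?_
      norm_num
      ring
    exact (Real.hasDerivAt_exp _).comp t hin
  have hφ : ∀ t, HasDerivAt φ (m' t * E t + m t * (E t * (-C * t))) t := by
    intro t
    exact (hm t).mul (hE t)
  have hφdiff : Differentiable ℝ φ := fun t => (hφ t).differentiableAt
  have hφ0 : φ 0 = (Fintype.card X : ℝ) := by
    simp [hφ_def, hm_def, hE_def]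
  have key' : ∀ t, |m' t| ≤ C * |t| * m t := key
  have main : φ θ ≤ φ 0 := by
    rcases le_total 0 θ with hθ | hθ
    · have hanti : AntitoneOn φ (Set.Icc 0 θ) := by
        apply antitoneOn_of_deriv_nonpos (convex_Icc 0 θ)
          (hφdiff.continuous.continuousOn) (hφdiff.differentiableOn)
        intro t ht
        rw [interior_Icc] at ht
        rw [(hφ t).deriv]
        have ht0 : 0 ≤ t := le_of_lt ht.1
        have h1 : m' t ≤ C * t * m t := by
          have := key' t
          rw [abs_of_nonneg ht0] at this
          exact le_trans (le_abs_self _) this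
        have h2 : (m' t - C * t * m t) * E t ≤ 0 :=
          mul_nonpos_of_nonpos_of_nonneg (by linarith) (Real.exp_pos _).le
        have h3 : m' t * E t + m t * (E t * (-C * t)) = (m' t - C * t * m t) * E t := by
          ring
        rw [h3]; exact h2
      exact hanti (Set.left_mem_Icc.mpr hθ) (Set.mem_Icc.mpr ⟨hθ, le_refl θ⟩) hθ
    · have hmono : MonotoneOn φ (Set.Icc θ 0) := by
        apply monotoneOn_of_deriv_nonneg (convex_Icc θ 0)
          (hφdiff.continuous.continuousOn) (hφdiff.differentiableOn)
        intro t ht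
        rw [interior_Icc] at ht
        rw [(hφ t).deriv]
        have ht0 : t ≤ 0 := le_of_lt ht.2
        have h1 : C * t * m t ≤ m' t := by
          have h := key' t
          rw [abs_of_nonpos ht0] at h
          have h' := neg_abs_le (m' t)
          nlinarith
        have h2 : 0 ≤ (m' t - C * t * m t) * E t :=
          mul_nonneg (by linarith) (Real.exp_pos _).le
        have h3 : m' t * E t + m t * (E t * (-C * t)) = (m' t - C * t * m t) * E t := by
          ring
        rw [h3]; exact h2
      exact hmono (Set.mem_Icc.mpr ⟨le_refl θ, hθ⟩) (Set.right_mem_Icc.mpr hθ) hθ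
  rw [hφ0] at main
  have hEθ : E θ = (Real.exp (C * θ^2 / 2))⁻¹ := by
    rw [hE_def]
    simp only
    rw [← Real.exp_neg]
    congr 1
    ring
  have hmain2 : m θ ≤ (Fintype.card X : ℝ) / E θ := by
    rw [le_div_iff₀ (Real.exp_pos _)]
    exact main
  calc m θ ≤ (Fintype.card X : ℝ) / E θ := hmain2
    _ = (Fintype.card X : ℝ) * Real.exp (C * θ^2 / 2) := by
        rw [hEθ]
        field_simp

private lemma key_estimate {n k : ℕ} (hn : 0 < n) (hk1 : 1 ≤ k) (hkn : k ≤ n)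
    {A B : Finset (Fin n)} (hAB : Disjoint A B) (hA : A.card = k) (hB : B.card = n - k)
    {g : ℝ → ℝ → ℝ} (hg : ∀ x y, g y x = - g x y) {d : ℝ} (hd : 0 ≤ d)
    (hgb : ∀ x y, |g x y| ≤ d) (ε : Fin n → ℝ) (t : ℝ) :
    |∑ π : Equiv.Perm (Fin n), (auxG A B g (ε ∘ π) / ((n:ℝ) * Real.sqrt k))
        * Real.exp (t * (auxG A B g (ε ∘ π) / ((n:ℝ) * Real.sqrt k)))|
      ≤ d^2 * |t| * ∑ π : Equiv.Perm (Fin n),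
          Real.exp (t * (auxG A B g (ε ∘ π) / ((n:ℝ) * Real.sqrt k))) := by
  classical
  have hn' : (0:ℝ) < n := by exact_mod_cast hn
  have hk' : (0:ℝ) < k := by exact_mod_cast hk1
  have hsq : (0:ℝ) < Real.sqrt k := Real.sqrt_pos.mpr hk'
  set c : ℝ := (n:ℝ) * Real.sqrt k with hc_def
  have hc : 0 < c := mul_pos hn' hsq
  have hc2 : c * c = (n:ℝ)^2 * k := by
    rw [hc_def]
    have : Real.sqrt k * Real.sqrt k = (k:ℝ) := Real.mul_self_sqrt hk'.le
    nlinarith [this]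
  set Gp : Equiv.Perm (Fin n) → ℝ := fun π => auxG A B g (ε ∘ π) with hGp_def
  set h : Equiv.Perm (Fin n) → ℝ := fun π => Real.exp (t * (Gp π / c)) with hh_def
  have hcomp : ∀ (π : Equiv.Perm (Fin n)) (i j : Fin n),
      Gp (π * Equiv.swap i j) = auxG A B g ((ε ∘ π) ∘ Equiv.swap i j) := by
    intro π i j
    rw [hGp_def]
    congr 1
  have hcard : A.card + B.card = n := by rw [hA, hB]; omega
  have idA : ∀ π : Equiv.Perm (Fin n),
      ∑ i ∈ A, ∑ j ∈ B, (Gp π - Gp (π * Equiv.swap i j)) = (n:ℝ) * Gp π := by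
    intro π
    have h0 := sum_diff_identity hAB hcard hg (ε ∘ π)
    calc ∑ i ∈ A, ∑ j ∈ B, (Gp π - Gp (π * Equiv.swap i j))
        = ∑ i ∈ A, ∑ j ∈ B,
            (auxG A B g (ε ∘ π) - auxG A B g ((ε ∘ π) ∘ Equiv.swap i j)) := by
          refine Finset.sum_congr rfl fun i _ => Finset.sum_congr rfl fun j _ => ?_
          rw [hcomp π i j]
      _ = (n:ℝ) * Gp π := h0
  have bndB : ∀ π : Equiv.Perm (Fin n),
      ∑ i ∈ A, ∑ j ∈ B, (Gp π - Gp (π * Equiv.swap i j))^2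
        ≤ 2 * (n:ℝ)^3 * k * d^2 := by
    intro π
    have h0 := sum_sq_bound hAB hA hB hkn hg hd hgb (ε ∘ π)
    calc ∑ i ∈ A, ∑ j ∈ B, (Gp π - Gp (π * Equiv.swap i j))^2
        = ∑ i ∈ A, ∑ j ∈ B,
            (auxG A B g (ε ∘ π) - auxG A B g ((ε ∘ π) ∘ Equiv.swap i j))^2 := by
          refine Finset.sum_congr rfl fun i _ => Finset.sum_congr rfl fun j _ => ?_
          rw [hcomp π i j]
      _ ≤ 2 * (n:ℝ)^3 * k * d^2 := h0
  have exch : ∀ (i j : Fin n) (F : Equiv.Perm (Fin n) → ℝ),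
      ∑ π : Equiv.Perm (Fin n), F (π * Equiv.swap i j)
        = ∑ π : Equiv.Perm (Fin n), F π :=
    fun i j F => Fintype.sum_bijective (fun π => π * Equiv.swap i j)
      (Equiv.mulRight (Equiv.swap i j)).bijective _ _ (fun π => rfl)
  have sw_inv : ∀ (π : Equiv.Perm (Fin n)) (i j : Fin n),
      (π * Equiv.swap i j) * Equiv.swap i j = π := by
    intro π i j
    rw [mul_assoc, Equiv.swap_mul_self, mul_one]
  set S : ℝ := ∑ π : Equiv.Perm (Fin n), h π with hS_def
  set Y : ℝ := ∑ π : Equiv.Perm (Fin n), Gp π * h π with hY_def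
  have hSpos : 0 ≤ S := Finset.sum_nonneg fun π _ => (Real.exp_pos _).le
  -- Step 1
  have step1 : ∑ i ∈ A, ∑ j ∈ B, ∑ π : Equiv.Perm (Fin n),
      (Gp π - Gp (π * Equiv.swap i j)) * h π = (n:ℝ) * Y := by
    have swap1 : ∑ i ∈ A, ∑ j ∈ B, ∑ π : Equiv.Perm (Fin n),
        (Gp π - Gp (π * Equiv.swap i j)) * h π
        = ∑ π : Equiv.Perm (Fin n), ∑ i ∈ A, ∑ j ∈ B,
            (Gp π - Gp (π * Equiv.swap i j)) * h π :=
      calc ∑ i ∈ A, ∑ j ∈ B, ∑ π : Equiv.Perm (Fin n),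
          (Gp π - Gp (π * Equiv.swap i j)) * h π
          = ∑ i ∈ A, ∑ π : Equiv.Perm (Fin n), ∑ j ∈ B,
              (Gp π - Gp (π * Equiv.swap i j)) * h π :=
            Finset.sum_congr rfl fun i _ => Finset.sum_comm
        _ = ∑ π : Equiv.Perm (Fin n), ∑ i ∈ A, ∑ j ∈ B,
              (Gp π - Gp (π * Equiv.swap i j)) * h π := Finset.sum_comm
    rw [swap1]
    have hper : ∀ π : Equiv.Perm (Fin n), ∑ i ∈ A, ∑ j ∈ B,
        (Gp π - Gp (π * Equiv.swap i j)) * h π = ((n:ℝ) * Gp π) * h π := by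
      intro π
      rw [← idA π, Finset.sum_mul]
      exact Finset.sum_congr rfl fun i _ => (Finset.sum_mul _ _ _).symm
    rw [Finset.sum_congr rfl fun π _ => hper π, hY_def, Finset.mul_sum]
    exact Finset.sum_congr rfl fun π _ => by ring
  -- Step 2
  have step2 : ∀ i ∈ A, ∀ j ∈ B,
      |∑ π : Equiv.Perm (Fin n), (Gp π - Gp (π * Equiv.swap i j)) * h π|
        ≤ |t| / (2 * c) * ∑ π : Equiv.Perm (Fin n),
            (Gp π - Gp (π * Equiv.swap i j))^2 * h π := by
    intro i _ j _
    set X : ℝ := ∑ π : Equiv.Perm (Fin n),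
      (Gp π - Gp (π * Equiv.swap i j)) * h π with hX_def
    have hswap : X = - ∑ π : Equiv.Perm (Fin n),
        (Gp π - Gp (π * Equiv.swap i j)) * h (π * Equiv.swap i j) := by
      rw [hX_def,
        ← exch i j (fun π => (Gp π - Gp (π * Equiv.swap i j)) * h π),
        ← Finset.sum_neg_distrib]
      refine Finset.sum_congr rfl fun π _ => ?_
      rw [sw_inv π i j]
      ring
    have h2X : 2 * X = ∑ π : Equiv.Perm (Fin n),
        (Gp π - Gp (π * Equiv.swap i j)) * (h π - h (π * Equiv.swap i j)) := by
      have htwo : 2 * X = X + X := by ring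
      rw [htwo]
      nth_rewrite 2 [hswap]
      rw [hX_def, ← Finset.sum_neg_distrib, ← Finset.sum_add_distrib]
      refine Finset.sum_congr rfl fun π _ => ?_
      ring
    have habs : |2 * X| ≤ ∑ π : Equiv.Perm (Fin n),
        |t| / (2 * c) * ((Gp π - Gp (π * Equiv.swap i j))^2
          * (h π + h (π * Equiv.swap i j))) := by
      rw [h2X]
      refine le_trans (Finset.abs_sum_le_sum_abs _ _) (Finset.sum_le_sum fun π _ => ?_)
      rw [abs_mul]
      have hexp : |h π - h (π * Equiv.swap i j)|
          ≤ |t * (Gp π / c) - t * (Gp (π * Equiv.swap i j) / c)|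
            * (h π + h (π * Equiv.swap i j)) / 2 :=
        abs_exp_sub_le _ _
      have harg : |t * (Gp π / c) - t * (Gp (π * Equiv.swap i j) / c)|
          = |t| * |Gp π - Gp (π * Equiv.swap i j)| / c := by
        rw [show t * (Gp π / c) - t * (Gp (π * Equiv.swap i j) / c)
            = t * (Gp π - Gp (π * Equiv.swap i j)) / c by ring]
        rw [abs_div, abs_mul, abs_of_pos hc]
      have habs2 : 0 ≤ |Gp π - Gp (π * Equiv.swap i j)| := abs_nonneg _
      calc |Gp π - Gp (π * Equiv.swap i j)| * |h π - h (π * Equiv.swap i j)|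
          ≤ |Gp π - Gp (π * Equiv.swap i j)|
            * (|t| * |Gp π - Gp (π * Equiv.swap i j)| / c
              * (h π + h (π * Equiv.swap i j)) / 2) := by
            apply mul_le_mul_of_nonneg_left _ habs2
            refine le_trans hexp (le_of_eq ?_)
            rw [harg]
        _ = |t| / (2 * c) * ((Gp π - Gp (π * Equiv.swap i j))^2
            * (h π + h (π * Equiv.swap i j))) := by
            rw [← sq_abs (Gp π - Gp (π * Equiv.swap i j))]
            ring
    have hsplit : ∑ π : Equiv.Perm (Fin n),
        |t| / (2 * c) * ((Gp π - Gp (π * Equiv.swap i j))^2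
          * (h π + h (π * Equiv.swap i j)))
        = |t| / (2 * c) * (∑ π : Equiv.Perm (Fin n),
            (Gp π - Gp (π * Equiv.swap i j))^2 * h π
          + ∑ π : Equiv.Perm (Fin n),
            (Gp π - Gp (π * Equiv.swap i j))^2 * h (π * Equiv.swap i j)) := by
      rw [← Finset.sum_add_distrib, Finset.mul_sum]
      refine Finset.sum_congr rfl fun π _ => ?_
      ring
    have hs2 : ∑ π : Equiv.Perm (Fin n),
        (Gp π - Gp (π * Equiv.swap i j))^2 * h (π * Equiv.swap i j)
        = ∑ π : Equiv.Perm (Fin n), (Gp π - Gp (π * Equiv.swap i j))^2 * h π := by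
      rw [← exch i j (fun π => (Gp π - Gp (π * Equiv.swap i j))^2 * h π)]
      refine Finset.sum_congr rfl fun π _ => ?_
      rw [sw_inv π i j]
      ring
    have final : |2 * X| ≤ |t| / (2 * c)
        * (2 * ∑ π : Equiv.Perm (Fin n), (Gp π - Gp (π * Equiv.swap i j))^2 * h π) := by
      refine le_trans habs ?_
      rw [hsplit, hs2]
      apply mul_le_mul_of_nonneg_left (le_of_eq (by ring))
      positivity
    rw [abs_mul, abs_two] at final
    have ht2 : 0 ≤ |t| / (2 * c) * ∑ π : Equiv.Perm (Fin n),
        (Gp π - Gp (π * Equiv.swap i j))^2 * h π := by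
      apply mul_nonneg (by positivity)
      exact Finset.sum_nonneg fun π _ => mul_nonneg (sq_nonneg _) (Real.exp_pos _).le
    linarith [final]
  -- Step 3
  have step3 : (n:ℝ) * |Y| ≤ |t| / (2 * c) * (2 * (n:ℝ)^3 * k * d^2 * S) := by
    have habs1 : (n:ℝ) * |Y| = |(n:ℝ) * Y| := by
      rw [abs_mul, abs_of_pos hn']
    rw [habs1, ← step1]
    have pull : ∑ i ∈ A, ∑ j ∈ B, (|t| / (2*c) * ∑ π : Equiv.Perm (Fin n),
        (Gp π - Gp (π * Equiv.swap i j))^2 * h π)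
        = |t| / (2*c) * ∑ i ∈ A, ∑ j ∈ B, ∑ π : Equiv.Perm (Fin n),
            (Gp π - Gp (π * Equiv.swap i j))^2 * h π := by
      rw [Finset.mul_sum]
      refine Finset.sum_congr rfl fun i _ => ?_
      rw [Finset.mul_sum]
    have comm2 : ∑ i ∈ A, ∑ j ∈ B, ∑ π : Equiv.Perm (Fin n),
        (Gp π - Gp (π * Equiv.swap i j))^2 * h π
        = ∑ π : Equiv.Perm (Fin n), ∑ i ∈ A, ∑ j ∈ B,
            (Gp π - Gp (π * Equiv.swap i j))^2 * h π :=
      calc ∑ i ∈ A, ∑ j ∈ B, ∑ π : Equiv.Perm (Fin n),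
          (Gp π - Gp (π * Equiv.swap i j))^2 * h π
          = ∑ i ∈ A, ∑ π : Equiv.Perm (Fin n), ∑ j ∈ B,
              (Gp π - Gp (π * Equiv.swap i j))^2 * h π :=
            Finset.sum_congr rfl fun i _ => Finset.sum_comm
        _ = ∑ π : Equiv.Perm (Fin n), ∑ i ∈ A, ∑ j ∈ B,
              (Gp π - Gp (π * Equiv.swap i j))^2 * h π := Finset.sum_comm
    have factor : ∀ π : Equiv.Perm (Fin n), ∑ i ∈ A, ∑ j ∈ B,
        (Gp π - Gp (π * Equiv.swap i j))^2 * h π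
        = (∑ i ∈ A, ∑ j ∈ B, (Gp π - Gp (π * Equiv.swap i j))^2) * h π := by
      intro π
      rw [Finset.sum_mul]
      exact Finset.sum_congr rfl fun i _ => (Finset.sum_mul _ _ _).symm
    calc |∑ i ∈ A, ∑ j ∈ B, ∑ π : Equiv.Perm (Fin n),
        (Gp π - Gp (π * Equiv.swap i j)) * h π|
        ≤ ∑ i ∈ A, ∑ j ∈ B, |∑ π : Equiv.Perm (Fin n),
            (Gp π - Gp (π * Equiv.swap i j)) * h π| :=
          le_trans (Finset.abs_sum_le_sum_abs _ _)
            (Finset.sum_le_sum fun i _ => Finset.abs_sum_le_sum_abs _ _)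
      _ ≤ ∑ i ∈ A, ∑ j ∈ B, (|t| / (2 * c) * ∑ π : Equiv.Perm (Fin n),
            (Gp π - Gp (π * Equiv.swap i j))^2 * h π) :=
          Finset.sum_le_sum fun i hi => Finset.sum_le_sum fun j hj => step2 i hi j hj
      _ = |t| / (2 * c) * ∑ π : Equiv.Perm (Fin n),
            (∑ i ∈ A, ∑ j ∈ B, (Gp π - Gp (π * Equiv.swap i j))^2) * h π := by
          rw [pull, comm2, Finset.sum_congr rfl fun π _ => factor π]
      _ ≤ |t| / (2 * c) * (2 * (n:ℝ)^3 * k * d^2 * S) := by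
          apply mul_le_mul_of_nonneg_left _ (by positivity)
          rw [hS_def, Finset.mul_sum]
          refine Finset.sum_le_sum fun π _ => ?_
          exact mul_le_mul_of_nonneg_right (bndB π) (Real.exp_pos _).le
  have step3' : 2 * c * ((n:ℝ) * |Y|) ≤ |t| * (2 * (n:ℝ)^3 * k * d^2 * S) := by
    have h0 := mul_le_mul_of_nonneg_left step3 (by positivity : (0:ℝ) ≤ 2 * c)
    refine le_trans h0 (le_of_eq ?_)
    field_simp
  have hYc : ∑ π : Equiv.Perm (Fin n), (Gp π / c) * Real.exp (t * (Gp π / c)) = Y / c := by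
    rw [hY_def, Finset.sum_div]
    refine Finset.sum_congr rfl fun π _ => ?_
    rw [hh_def]
    ring
  calc |∑ π : Equiv.Perm (Fin n), (auxG A B g (ε ∘ π) / ((n:ℝ) * Real.sqrt k))
      * Real.exp (t * (auxG A B g (ε ∘ π) / ((n:ℝ) * Real.sqrt k)))|
      = |Y / c| := by rw [← hYc]
    _ = |Y| / c := by rw [abs_div, abs_of_pos hc]
    _ ≤ d^2 * |t| * S := by
        rw [div_le_iff₀ hc]
        have h2nc : (0:ℝ) < 2 * (n:ℝ) * c := by positivity
        rw [← mul_le_mul_iff_right₀ h2nc]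
        calc 2 * (n:ℝ) * c * |Y| = 2 * c * ((n:ℝ) * |Y|) := by ring
          _ ≤ |t| * (2 * (n:ℝ)^3 * k * d^2 * S) := step3'
          _ = 2 * (n:ℝ) * c * (d^2 * |t| * S * c) := by
              have hk2 : Real.sqrt (k:ℝ) ^ 2 = (k:ℝ) := Real.sq_sqrt hk'.le
              rw [hc_def]
              linear_combination (-(2 * |t| * (n:ℝ)^3 * d^2 * S)) * hk2
    _ = d^2 * |t| * ∑ π : Equiv.Perm (Fin n),
        Real.exp (t * (auxG A B g (ε ∘ π) / ((n:ℝ) * Real.sqrt k))) := rfl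


/-- For `ε₁,...,εₙ` in a finite set `𝒜 ⊂ ℝ`, `d ≥ 0`, a uniform random permutation `π`, and
`W_{k,d} = (1/n) Σ_{i ≤ k} Σ_{j > k} (ε_{π(i)} − ε_{π(j)}) 1(|ε_{π(i)} − ε_{π(j)}| = d)`,
one has `E[exp(θ W_{k,d}/√k)] ≤ exp(d² θ²/2)` for all `θ ∈ ℝ` and `1 ≤ k ≤ n`. -/
theorem mgf_Wkd_bound (n : ℕ) (hn : 0 < n) (𝒜 : Finset ℝ)
    (ε : Fin n → ℝ) (hε : ∀ i, ε i ∈ 𝒜) (d : ℝ) (hd : 0 ≤ d)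
    (θ : ℝ) (k : ℕ) (hk1 : 1 ≤ k) (hkn : k ≤ n) :
    (∑ π : Equiv.Perm (Fin n), Real.exp (θ * ((1 / n : ℝ) *
        ∑ i ∈ Finset.univ.filter (fun i : Fin n => (i : ℕ) < k),
          ∑ j ∈ Finset.univ.filter (fun j : Fin n => k ≤ (j : ℕ)),
            (if |ε (π i) - ε (π j)| = d then ε (π i) - ε (π j) else 0)) / Real.sqrt k))
        / (Nat.factorial n : ℝ)
      ≤ Real.exp (d ^ 2 * θ ^ 2 / 2) := by
  classical
  set A := Finset.univ.filter (fun i : Fin n => (i : ℕ) < k) with hA_def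
  set B := Finset.univ.filter (fun j : Fin n => k ≤ (j : ℕ)) with hB_def
  set g : ℝ → ℝ → ℝ := fun x y => if |x - y| = d then x - y else 0 with hg_def
  have hganti : ∀ x y, g y x = - g x y := by
    intro x y
    rw [hg_def]
    simp only
    rw [abs_sub_comm y x]
    by_cases hxy : |x - y| = d
    · simp only [hxy, if_pos rfl, if_true]
      ring
    · simp [hxy]
  have hgb : ∀ x y, |g x y| ≤ d := by
    intro x y
    rw [hg_def]
    simp only
    by_cases hxy : |x - y| = d
    · rw [if_pos hxy]; exact le_of_eq hxy
    · rw [if_neg hxy]; simpa using hd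
  have hAB : Disjoint A B := by
    rw [Finset.disjoint_left]
    intro a ha hb
    rw [hA_def, Finset.mem_filter] at ha
    rw [hB_def, Finset.mem_filter] at hb
    omega
  have hcA : A.card = k := by
    have : A = Finset.attachFin (Finset.range k)
        (fun m hm => lt_of_lt_of_le (Finset.mem_range.mp hm) hkn) := by
      ext x
      simp [hA_def, Finset.mem_attachFin]
    rw [this, Finset.card_attachFin, Finset.card_range]
  have hcB : B.card = n - k := by
    have h : B = Aᶜ := by
      ext x
      simp [hA_def, hB_def, not_lt]
    rw [h, Finset.card_compl, hcA, Fintype.card_fin]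
  set W : Equiv.Perm (Fin n) → ℝ :=
    fun π => auxG A B g (ε ∘ π) / ((n:ℝ) * Real.sqrt k) with hW_def
  have key : ∀ t : ℝ, |∑ π : Equiv.Perm (Fin n), W π * Real.exp (t * W π)|
      ≤ d^2 * |t| * ∑ π : Equiv.Perm (Fin n), Real.exp (t * W π) := fun t =>
    key_estimate hn hk1 hkn hAB hcA hcB hganti hd hgb ε t
  have hg2 := gronwall_mgf W (d^2) (by positivity) key θ
  have hn0 : (n:ℝ) ≠ 0 := by positivity
  have hk' : (0:ℝ) < k := by exact_mod_cast hk1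
  have hs0 : Real.sqrt k ≠ 0 := ne_of_gt (Real.sqrt_pos.mpr hk')
  have hexp_eq : ∀ π : Equiv.Perm (Fin n),
      θ * ((1 / n : ℝ) * ∑ i ∈ A, ∑ j ∈ B,
        (if |ε (π i) - ε (π j)| = d then ε (π i) - ε (π j) else 0)) / Real.sqrt k
      = θ * W π := by
    intro π
    have hG : auxG A B g (ε ∘ π) = ∑ i ∈ A, ∑ j ∈ B,
        (if |ε (π i) - ε (π j)| = d then ε (π i) - ε (π j) else 0) := by
      rw [auxG_def]
      exact Finset.sum_congr rfl fun i _ => Finset.sum_congr rfl fun j _ => rfl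
    rw [hW_def]
    simp only
    rw [← hG]
    field_simp
  have hsum_eq : (∑ π : Equiv.Perm (Fin n), Real.exp (θ * ((1 / n : ℝ) *
      ∑ i ∈ A, ∑ j ∈ B,
        (if |ε (π i) - ε (π j)| = d then ε (π i) - ε (π j) else 0)) / Real.sqrt k))
      = ∑ π : Equiv.Perm (Fin n), Real.exp (θ * W π) :=
    Finset.sum_congr rfl fun π _ => by rw [hexp_eq π]
  rw [hsum_eq, div_le_iff₀ (by positivity : (0:ℝ) < (Nat.factorial n : ℝ))]
  calc ∑ π : Equiv.Perm (Fin n), Real.exp (θ * W π)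
      ≤ (Fintype.card (Equiv.Perm (Fin n)) : ℝ) * Real.exp (d^2 * θ^2 / 2) := hg2
    _ = (Nat.factorial n : ℝ) * Real.exp (d^2 * θ^2 / 2) := by
        rw [Fintype.card_perm, Fintype.card_fin]
    _ = Real.exp (d ^ 2 * θ ^ 2 / 2) * (Nat.factorial n : ℝ) := by ring
end

section
/- Let ε₁,...,εₙ be elements of a finite set 𝒜 ⊂ ℝ with B = max_{a∈𝒜}|a|, π a uniform random permutation, Sₙ = Σ εᵢ (nonrandom), S_k = Σ_{i=1}^k ε_{π(i)}. Then for 1 ≤ k ≤ 2n/3 and 0 < α < 1/(4B²), E[exp(α S_k²/k)] ≤ (1 − 4αB²)^{-1/2} exp( α k Sₙ² / ((1 − 4αB²) n²) ). -/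
open Finset MeasureTheory

section ScalarAnalysis
open Real

lemma aux_sinh (s : ℝ) (hs : 0 ≤ s) : Real.sinh s ≤ s * Real.cosh s := by
  have key : MonotoneOn (fun x : ℝ => x * Real.cosh x - Real.sinh x) (Set.Ici 0) := by
    apply monotoneOn_of_deriv_nonneg (convex_Ici 0)
    · fun_prop
    · intro x _
      exact (((differentiable_id.mul Real.differentiable_cosh).sub
        Real.differentiable_sinh) x).differentiableWithinAt
    · intro x hx
      have hd : HasDerivAt (fun x : ℝ => x * Real.cosh x - Real.sinh x)
          (1 * Real.cosh x + x * Real.sinh x - Real.cosh x) x :=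
        ((hasDerivAt_id x).mul (Real.hasDerivAt_cosh x)).sub (Real.hasDerivAt_sinh x)
      rw [hd.deriv]
      simp only [Set.mem_Ioi, interior_Ici] at hx
      have := Real.sinh_nonneg_iff.mpr hx.le
      nlinarith
  have := key (Set.self_mem_Ici) hs hs
  simp only [Real.sinh_zero, Real.cosh_zero] at this
  linarith [this]

lemma key_scalar_nonneg (m s : ℝ) (hm1 : -1 ≤ m) (hm2 : m ≤ 1) (hs : 0 ≤ s) :
    Real.cosh s + m * Real.sinh s ≤ Real.exp (m * s + s ^ 2) := by
  -- positivity of D x = cosh x + m sinh x for x ≥ 0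
  have hD : ∀ x : ℝ, 0 ≤ x → 0 < Real.cosh x + m * Real.sinh x := by
    intro x hx
    have h1 : Real.sinh x ≤ Real.cosh x := by
      have := Real.cosh_sq x
      nlinarith [Real.cosh_pos x, Real.sinh_nonneg_iff.mpr hx]
    have h2 := Real.sinh_nonneg_iff.mpr hx
    have h3 : Real.cosh x - Real.sinh x = Real.exp (-x) := Real.cosh_sub_sinh x
    nlinarith [Real.exp_pos (-x), mul_le_mul_of_nonneg_right hm1 h2]
  set f : ℝ → ℝ := fun x => m * x + x ^ 2 - Real.log (Real.cosh x + m * Real.sinh x) with hf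
  have key : MonotoneOn f (Set.Ici 0) := by
    apply monotoneOn_of_deriv_nonneg (convex_Ici 0)
    · apply ContinuousOn.sub (by fun_prop)
      apply ContinuousOn.log (by fun_prop)
      intro x hx; exact ne_of_gt (hD x hx)
    · intro x hx
      rw [interior_Ici] at hx
      have hd : HasDerivAt f
          (m * 1 + 2 * x - (Real.sinh x + m * Real.cosh x) / (Real.cosh x + m * Real.sinh x)) x := by
        apply HasDerivAt.sub
        · exact (((hasDerivAt_id x).const_mul m).add
            (hasDerivAt_pow 2 x)).congr_deriv (by norm_num)
        · exact HasDerivAt.log ((Real.hasDerivAt_cosh x).add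
            ((Real.hasDerivAt_sinh x).const_mul m)) (ne_of_gt (hD x hx.le))
      exact hd.differentiableAt.differentiableWithinAt
    · intro x hx
      rw [interior_Ici] at hx
      have hd : HasDerivAt f
          (m * 1 + 2 * x - (Real.sinh x + m * Real.cosh x) / (Real.cosh x + m * Real.sinh x)) x := by
        apply HasDerivAt.sub
        · exact (((hasDerivAt_id x).const_mul m).add
            (hasDerivAt_pow 2 x)).congr_deriv (by norm_num)
        · exact HasDerivAt.log ((Real.hasDerivAt_cosh x).add
            ((Real.hasDerivAt_sinh x).const_mul m)) (ne_of_gt (hD x hx.le))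
      rw [hd.deriv]
      have hx0 : (0:ℝ) < x := hx
      rw [sub_nonneg, div_le_iff₀ (hD x hx.le)]
      -- reduce to q(m) ≥ 0
      have hsh := Real.sinh_nonneg_iff.mpr hx.le
      have hch := (Real.cosh_pos x).le
      have haux := aux_sinh x hx.le
      rcases le_or_gt x 1 with hx1 | hx1
      · have h3 : (1 + x ^ 2) * Real.sinh x ≤ (1 + x ^ 2) * (x * Real.cosh x) := by nlinarith
        have h4 : (1 + x ^ 2) * (x * Real.cosh x) ≤ 2 * (x * Real.cosh x) := by
          nlinarith [mul_nonneg (mul_nonneg (mul_nonneg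
            (by linarith : (0:ℝ) ≤ 1 - x) (by linarith : (0:ℝ) ≤ 1 + x)) hx0.le) hch]
        nlinarith [mul_nonneg hsh (sq_nonneg (m + x)), h3, h4]
      · have hexp : Real.cosh x - Real.sinh x = Real.exp (-x) := Real.cosh_sub_sinh x
        nlinarith [mul_nonneg (mul_nonneg (by linarith : (0:ℝ) ≤ m + 1) hsh)
          (by linarith : (0:ℝ) ≤ m - 1 + 2 * x), Real.exp_pos (-x), hx0.le]
  have h0 : f 0 = 0 := by simp [hf]
  have hfs : 0 ≤ f s := by
    have := key Set.self_mem_Ici hs hs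
    rwa [h0] at this
  have : Real.log (Real.cosh s + m * Real.sinh s) ≤ m * s + s ^ 2 := by
    simp only [hf] at hfs; linarith
  rwa [Real.log_le_iff_le_exp (hD s hs)] at this

lemma key_scalar (m s : ℝ) (hm1 : -1 ≤ m) (hm2 : m ≤ 1) :
    Real.cosh s + m * Real.sinh s ≤ Real.exp (m * s + s ^ 2) := by
  rcases le_or_gt 0 s with hs | hs
  · exact key_scalar_nonneg m s hm1 hm2 hs
  · have := key_scalar_nonneg (-m) (-s) (by linarith) (by linarith) (by linarith)
    simpa [Real.cosh_neg, Real.sinh_neg, neg_mul_neg] using this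

lemma chord_exp (B u x : ℝ) (hB : 0 < B) (h1 : -B ≤ x) (h2 : x ≤ B) :
    Real.exp (u * x) ≤ Real.cosh (u * B) + (x / B) * Real.sinh (u * B) := by
  have ha : (0:ℝ) ≤ (B + x) / (2 * B) := div_nonneg (by linarith) (by linarith)
  have hb : (0:ℝ) ≤ (B - x) / (2 * B) := div_nonneg (by linarith) (by linarith)
  have hab : (B + x) / (2 * B) + (B - x) / (2 * B) = 1 := by field_simp; ring
  have hcx := convexOn_exp.2 (Set.mem_univ (u * B)) (Set.mem_univ (-(u * B))) ha hb hab
  have key : ((B + x) / (2 * B)) • (u * B) + ((B - x) / (2 * B)) • (-(u * B)) = u * x := by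
    simp only [smul_eq_mul]
    field_simp
    ring
  rw [key] at hcx
  refine hcx.trans_eq ?_
  rw [smul_eq_mul, smul_eq_mul, Real.cosh_eq, Real.sinh_eq]
  field_simp
  ring

lemma sum_exp_le (n : ℕ) (hn : 0 < n) (ε : Fin n → ℝ) (B : ℝ) (hB : 0 < B)
    (hle : ∀ i, |ε i| ≤ B) (u : ℝ) :
    ∑ i, Real.exp (u * ε i) ≤
      n * Real.exp (u * ((∑ i, ε i) / n) + B ^ 2 * u ^ 2) := by
  set μ : ℝ := (∑ i, ε i) / n with hμdef
  have hn' : (0:ℝ) < n := by exact_mod_cast hn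
  have hμ : |μ| ≤ B := by
    rw [hμdef, abs_div, abs_of_pos hn', div_le_iff₀ hn']
    calc |∑ i, ε i| ≤ ∑ i, |ε i| := Finset.abs_sum_le_sum_abs _ _
    _ ≤ ∑ _i : Fin n, B := Finset.sum_le_sum fun i _ => hle i
    _ = B * n := by simp [mul_comm]
  have step1 : ∑ i, Real.exp (u * ε i) ≤
      ∑ i, (Real.cosh (u * B) + (ε i / B) * Real.sinh (u * B)) := by
    apply Finset.sum_le_sum
    intro i _
    exact chord_exp B u (ε i) hB (neg_le_of_abs_le (hle i)) (le_of_abs_le (hle i))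
  have step2 : ∑ i, (Real.cosh (u * B) + (ε i / B) * Real.sinh (u * B)) =
      n * (Real.cosh (u * B) + (μ / B) * Real.sinh (u * B)) := by
    rw [Finset.sum_add_distrib]
    simp only [Finset.sum_const, Finset.card_univ, Fintype.card_fin, nsmul_eq_mul,
      ← Finset.sum_div, ← Finset.sum_mul, hμdef]
    field_simp
  have hm1 : -1 ≤ μ / B := by rw [neg_le, ← neg_div]; exact (div_le_one hB).mpr (by
    have := neg_le_of_abs_le hμ; linarith)
  have hm2 : μ / B ≤ 1 := (div_le_one hB).mpr (le_of_abs_le hμ)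
  have step3 := key_scalar (μ / B) (u * B) hm1 hm2
  have harg : (μ / B) * (u * B) + (u * B) ^ 2 = u * μ + B ^ 2 * u ^ 2 := by
    field_simp
  rw [harg] at step3
  calc ∑ i, Real.exp (u * ε i) ≤ n * (Real.cosh (u * B) + (μ / B) * Real.sinh (u * B)) :=
        step1.trans_eq step2
  _ ≤ n * Real.exp (u * μ + B ^ 2 * u ^ 2) := by
      apply mul_le_mul_of_nonneg_left step3 hn'.le


lemma gauss_integrable {b : ℝ} (hb : 0 < b) (c : ℝ) :
    Integrable (fun z : ℝ => Real.exp (-b * z ^ 2 + c * z)) := by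
  have h1 : Integrable (fun z : ℝ => Real.exp (-b * z ^ 2)) := integrable_exp_neg_mul_sq hb
  have h2 := (h1.comp_sub_right (c / (2 * b))).mul_const (Real.exp (c ^ 2 / (4 * b)))
  refine h2.congr (Filter.Eventually.of_forall fun z => ?_)
  simp only [← Real.exp_add]
  congr 1
  field_simp
  ring

lemma gauss_integral {b : ℝ} (hb : 0 < b) (c : ℝ) :
    ∫ z : ℝ, Real.exp (-b * z ^ 2 + c * z)
      = Real.sqrt (π / b) * Real.exp (c ^ 2 / (4 * b)) := by
  have key : ∀ z : ℝ, Real.exp (-b * z ^ 2 + c * z)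
      = Real.exp (-b * (z - c / (2 * b)) ^ 2) * Real.exp (c ^ 2 / (4 * b)) := by
    intro z
    rw [← Real.exp_add]
    congr 1
    field_simp
    ring
  simp_rw [key]
  rw [MeasureTheory.integral_mul_const]
  rw [integral_sub_right_eq_self (fun z : ℝ => Real.exp (-b * z ^ 2)) (c / (2 * b))]
  rw [integral_gaussian]

end ScalarAnalysis

lemma swap_sum_nonneg {n : ℕ} (x : Fin n → ℝ) (hx : ∀ i, 0 ≤ x i) (k : ℕ) :
    0 ≤ ∑ S ∈ powersetCard k (univ : Finset (Fin n)),
        ∑ p ∈ S ×ˢ ((univ : Finset (Fin n)) \ S), (∏ i ∈ S, x i) * (x p.1 - x p.2) := by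
  classical
  set D := (powersetCard k (univ : Finset (Fin n))).sigma
      (fun S => S ×ˢ ((univ : Finset (Fin n)) \ S)) with hD
  set g : (Σ _ : Finset (Fin n), Fin n × Fin n) → ℝ :=
      fun d => (∏ i ∈ d.1, x i) * (x d.2.1 - x d.2.2) with hg
  have hsum : ∑ S ∈ powersetCard k (univ : Finset (Fin n)),
      ∑ p ∈ S ×ˢ ((univ : Finset (Fin n)) \ S), (∏ i ∈ S, x i) * (x p.1 - x p.2)
      = ∑ d ∈ D, g d := by
    rw [hD, Finset.sum_sigma]
  rw [hsum]
  set σ : (Σ _ : Finset (Fin n), Fin n × Fin n) → (Σ _ : Finset (Fin n), Fin n × Fin n) :=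
      fun d => ⟨insert d.2.2 (d.1.erase d.2.1), (d.2.2, d.2.1)⟩ with hσ
  have hmemD : ∀ d, d ∈ D ↔ d.1.card = k ∧ d.2.1 ∈ d.1 ∧ d.2.2 ∉ d.1 := by
    intro d
    rw [hD, Finset.mem_sigma, Finset.mem_product, Finset.mem_sdiff, mem_powersetCard_univ]
    simp only [Finset.mem_univ, true_and]
  have hij : ∀ d ∈ D, d.2.1 ≠ d.2.2 := by
    intro d hd
    obtain ⟨_, hi, hj⟩ := (hmemD d).mp hd
    intro h; exact hj (h ▸ hi)
  have hmem : ∀ d ∈ D, σ d ∈ D := by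
    intro d hd
    obtain ⟨hcard, hi, hj⟩ := (hmemD d).mp hd
    have hne := hij d hd
    have hjer : d.2.2 ∉ d.1.erase d.2.1 := fun h => hj (Finset.mem_of_mem_erase h)
    refine (hmemD (σ d)).mpr ⟨?_, ?_, ?_⟩
    · rw [hσ]
      simp only
      rw [Finset.card_insert_of_notMem hjer, Finset.card_erase_of_mem hi, hcard]
      have : 1 ≤ k := by
        rw [← hcard]; exact Finset.card_pos.mpr ⟨d.2.1, hi⟩
      omega
    · exact Finset.mem_insert_self _ _
    · rw [hσ]
      simp only
      intro h
      rcases Finset.mem_insert.mp h with h | h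
      · exact hne h
      · exact (Finset.notMem_erase _ _) h
  have hinv : ∀ d ∈ D, σ (σ d) = d := by
    intro d hd
    obtain ⟨hcard, hi, hj⟩ := (hmemD d).mp hd
    have hjer : d.2.2 ∉ d.1.erase d.2.1 := fun h => hj (Finset.mem_of_mem_erase h)
    rw [hσ]
    simp only
    rw [Finset.erase_insert hjer, Finset.insert_erase hi]
  have hswap : ∑ d ∈ D, g (σ d) = ∑ d ∈ D, g d :=
    Finset.sum_nbij' σ σ hmem hmem hinv hinv (fun a _ => rfl)
  have hpos : ∀ d ∈ D, 0 ≤ g d + g (σ d) := by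
    intro d hd
    obtain ⟨hcard, hi, hj⟩ := (hmemD d).mp hd
    have hjer : d.2.2 ∉ d.1.erase d.2.1 := fun h => hj (Finset.mem_of_mem_erase h)
    have h1 : ∏ i ∈ d.1, x i = x d.2.1 * ∏ i ∈ d.1.erase d.2.1, x i :=
      (Finset.mul_prod_erase d.1 x hi).symm
    have h2 : ∏ i ∈ (σ d).1, x i = x d.2.2 * ∏ i ∈ d.1.erase d.2.1, x i := by
      rw [hσ]; exact Finset.prod_insert hjer
    have hP : 0 ≤ ∏ i ∈ d.1.erase d.2.1, x i := Finset.prod_nonneg fun i _ => hx i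
    rw [hg]
    simp only
    rw [h1]
    rw [h2]
    nlinarith [sq_nonneg (x d.2.1 - x d.2.2)]
  have h2 : 0 ≤ ∑ d ∈ D, (g d + g (σ d)) := Finset.sum_nonneg hpos
  rw [Finset.sum_add_distrib, hswap] at h2
  linarith

lemma insert_sum_eq {n : ℕ} (x : Fin n → ℝ) (k : ℕ) :
    ∑ S ∈ powersetCard k (univ : Finset (Fin n)),
        (∏ i ∈ S, x i) * (∑ j ∈ (univ : Finset (Fin n)) \ S, x j)
      = ((k : ℝ) + 1) * ∑ S ∈ powersetCard (k + 1) (univ : Finset (Fin n)), ∏ i ∈ S, x i := by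
  classical
  have lhs_eq : ∑ S ∈ powersetCard k (univ : Finset (Fin n)),
      (∏ i ∈ S, x i) * (∑ j ∈ (univ : Finset (Fin n)) \ S, x j)
      = ∑ S ∈ powersetCard k (univ : Finset (Fin n)),
        ∑ j ∈ (univ : Finset (Fin n)) \ S, (∏ i ∈ S, x i) * x j := by
    exact Finset.sum_congr rfl fun S _ => Finset.mul_sum _ _ _
  have rhs_eq : ∑ S ∈ powersetCard (k + 1) (univ : Finset (Fin n)), ∏ i ∈ S, x i
      = (((k : ℝ) + 1))⁻¹ * ∑ S ∈ powersetCard (k + 1) (univ : Finset (Fin n)),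
          ∑ j ∈ S, ∏ i ∈ S, x i := by
    rw [Finset.mul_sum]
    refine Finset.sum_congr rfl fun S hS => ?_
    rw [Finset.sum_const, mem_powersetCard_univ.mp hS, nsmul_eq_mul]
    push_cast
    rw [← mul_assoc, inv_mul_cancel₀ (by positivity), one_mul]
  rw [lhs_eq, rhs_eq, ← mul_assoc, mul_inv_cancel₀ (by positivity : ((k:ℝ)+1) ≠ 0), one_mul]
  rw [Finset.sum_sigma', Finset.sum_sigma']
  refine Finset.sum_nbij' (fun d => ⟨insert d.2 d.1, d.2⟩) (fun d => ⟨d.1.erase d.2, d.2⟩)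
    ?_ ?_ ?_ ?_ ?_
  · rintro ⟨S, j⟩ hd
    rw [Finset.mem_sigma, mem_powersetCard_univ] at hd ⊢
    obtain ⟨hS, hj⟩ := hd
    rw [Finset.mem_sdiff] at hj
    exact ⟨by rw [Finset.card_insert_of_notMem hj.2, hS], Finset.mem_insert_self _ _⟩
  · rintro ⟨S, j⟩ hd
    rw [Finset.mem_sigma, mem_powersetCard_univ] at hd ⊢
    obtain ⟨hS, hj⟩ := hd
    refine ⟨by rw [Finset.card_erase_of_mem hj, hS]; rfl, ?_⟩
    rw [Finset.mem_sdiff]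
    exact ⟨Finset.mem_univ _, Finset.notMem_erase _ _⟩
  · rintro ⟨S, j⟩ hd
    rw [Finset.mem_sigma, Finset.mem_sdiff] at hd
    simp only
    rw [Finset.erase_insert hd.2.2]
  · rintro ⟨S, j⟩ hd
    rw [Finset.mem_sigma] at hd
    simp only
    rw [Finset.insert_erase hd.2]
  · rintro ⟨S, j⟩ hd
    rw [Finset.mem_sigma, Finset.mem_sdiff] at hd
    simp only
    rw [Finset.prod_insert hd.2.2]
    ring

lemma maclaurin {n : ℕ} (hn : 0 < n) (x : Fin n → ℝ) (hx : ∀ i, 0 ≤ x i) :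
    ∀ k : ℕ, k ≤ n → ∑ S ∈ powersetCard k (univ : Finset (Fin n)), ∏ i ∈ S, x i
      ≤ (n.choose k : ℝ) * ((∑ i, x i) / n) ^ k := by
  classical
  set T : ℝ := ∑ i, x i with hT
  have hT0 : 0 ≤ T := Finset.sum_nonneg fun i _ => hx i
  have hn' : (0:ℝ) < n := by exact_mod_cast hn
  intro k
  induction k with
  | zero => simp
  | succ k ih =>
    intro hk1
    have hkn : k ≤ n := by omega
    have hkn' : (k : ℝ) ≤ n := by exact_mod_cast hkn
    have ihk := ih hkn
    -- notation
    set e : ℕ → ℝ := fun m => ∑ S ∈ powersetCard m (univ : Finset (Fin n)), ∏ i ∈ S, x i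
      with he
    have he_nonneg : ∀ m, 0 ≤ e m := fun m =>
      Finset.sum_nonneg fun S _ => Finset.prod_nonneg fun i _ => hx i
    -- in/out sums
    have hcards : ∀ S ∈ powersetCard k (univ : Finset (Fin n)),
        ((univ : Finset (Fin n)) \ S).card = n - k := by
      intro S hS
      rw [Finset.card_sdiff_of_subset (Finset.subset_univ S), mem_powersetCard_univ.mp hS,
        Finset.card_univ, Fintype.card_fin]
    have hinout : ∀ S : Finset (Fin n),
        (∑ i ∈ S, x i) + (∑ j ∈ (univ : Finset (Fin n)) \ S, x j) = T := by
      intro S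
      rw [hT, add_comm]
      exact Finset.sum_sdiff (Finset.subset_univ S)
    -- swap sum expansion
    have hexp : ∑ S ∈ powersetCard k (univ : Finset (Fin n)),
        ∑ p ∈ S ×ˢ ((univ : Finset (Fin n)) \ S), (∏ i ∈ S, x i) * (x p.1 - x p.2)
        = ∑ S ∈ powersetCard k (univ : Finset (Fin n)), (∏ i ∈ S, x i) *
            (((n:ℝ) - k) * (∑ i ∈ S, x i) - (k:ℝ) * (∑ j ∈ (univ : Finset (Fin n)) \ S, x j))
        := by
      refine Finset.sum_congr rfl fun S hS => ?_
      rw [← Finset.mul_sum]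
      congr 1
      rw [Finset.sum_product]
      have : ∀ i ∈ S, ∑ j ∈ (univ : Finset (Fin n)) \ S, (x i - x j)
          = ((univ : Finset (Fin n)) \ S).card * x i
            - ∑ j ∈ (univ : Finset (Fin n)) \ S, x j := by
        intro i _
        rw [Finset.sum_sub_distrib, Finset.sum_const, nsmul_eq_mul]
      rw [Finset.sum_congr rfl this, Finset.sum_sub_distrib, ← Finset.mul_sum,
        Finset.sum_const, hcards S hS, mem_powersetCard_univ.mp hS, nsmul_eq_mul,
        Nat.cast_sub hkn]
    -- key inequality
    have hkey : 0 ≤ ∑ S ∈ powersetCard k (univ : Finset (Fin n)), (∏ i ∈ S, x i) *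
        (((n:ℝ) - k) * (∑ i ∈ S, x i) - (k:ℝ) * (∑ j ∈ (univ : Finset (Fin n)) \ S, x j)) :=
      hexp ▸ swap_sum_nonneg x hx k
    set A : ℝ := ∑ S ∈ powersetCard k (univ : Finset (Fin n)),
        (∏ i ∈ S, x i) * (∑ i ∈ S, x i) with hA
    set Bq : ℝ := ∑ S ∈ powersetCard k (univ : Finset (Fin n)),
        (∏ i ∈ S, x i) * (∑ j ∈ (univ : Finset (Fin n)) \ S, x j) with hBq
    have hkey2 : (k : ℝ) * Bq ≤ ((n:ℝ) - k) * A := by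
      have : ∑ S ∈ powersetCard k (univ : Finset (Fin n)), (∏ i ∈ S, x i) *
          (((n:ℝ) - k) * (∑ i ∈ S, x i) - (k:ℝ) * (∑ j ∈ (univ : Finset (Fin n)) \ S, x j))
          = ((n:ℝ) - k) * A - (k:ℝ) * Bq := by
        rw [hA, hBq, Finset.mul_sum, Finset.mul_sum, ← Finset.sum_sub_distrib]
        exact Finset.sum_congr rfl fun S _ => by ring
      rw [this] at hkey
      linarith
    have hABT : A + Bq = T * e k := by
      rw [hA, hBq, ← Finset.sum_add_distrib]
      have hptwise : ∀ S ∈ powersetCard k (univ : Finset (Fin n)),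
          (∏ i ∈ S, x i) * (∑ i ∈ S, x i) + (∏ i ∈ S, x i) *
            (∑ j ∈ (univ : Finset (Fin n)) \ S, x j)
          = T * ∏ i ∈ S, x i := by
        intro S _
        rw [← mul_add, hinout S]
        ring
      rw [Finset.sum_congr rfl hptwise, ← Finset.mul_sum]
    have hBq_nonneg : 0 ≤ Bq := by
      rw [hBq]
      refine Finset.sum_nonneg fun S _ => mul_nonneg
        (Finset.prod_nonneg fun i _ => hx i) (Finset.sum_nonneg fun j _ => hx j)
    have hnBq : (n : ℝ) * Bq ≤ ((n:ℝ) - k) * (T * e k) := by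
      rw [← hABT]
      nlinarith [hkey2, hBq_nonneg]
    -- Bq = (k+1) e (k+1)
    have hBqe : Bq = ((k : ℝ) + 1) * e (k + 1) := insert_sum_eq x k
    -- conclude
    have hchoose : ((k : ℝ) + 1) * (n.choose (k+1) : ℝ) = (n.choose k : ℝ) * ((n:ℝ) - k) := by
      have := Nat.choose_succ_right_eq n k
      have hc : ((n.choose (k+1) * (k+1) : ℕ) : ℝ) = ((n.choose k * (n - k) : ℕ) : ℝ) := by
        exact_mod_cast congrArg (Nat.cast : ℕ → ℝ) this
      push_cast [Nat.cast_sub hkn] at hc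
      linarith
    have hgoal : (n : ℝ) * (((k : ℝ) + 1) * e (k + 1))
        ≤ (n : ℝ) * (((k : ℝ) + 1) * ((n.choose (k+1) : ℝ) * (T / n) ^ (k+1))) := by
      rw [← hBqe]
      calc (n : ℝ) * Bq ≤ ((n:ℝ) - k) * (T * e k) := hnBq
      _ ≤ ((n:ℝ) - k) * (T * ((n.choose k : ℝ) * (T / n) ^ k)) := by
          apply mul_le_mul_of_nonneg_left _ (by linarith)
          exact mul_le_mul_of_nonneg_left ihk hT0
      _ = (n : ℝ) * (((k : ℝ) + 1) * ((n.choose (k+1) : ℝ) * (T / n) ^ (k+1))) := by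
          rw [pow_succ]
          have hTn : (n : ℝ) * ((T / n) ^ k * (T / n)) = (T / n) ^ k * T := by
            field_simp
          calc ((n:ℝ) - k) * (T * ((n.choose k : ℝ) * (T / n) ^ k))
              = ((n.choose k : ℝ) * ((n:ℝ) - k)) * ((T / n) ^ k * T) := by ring
          _ = (((k : ℝ) + 1) * (n.choose (k+1) : ℝ)) * ((n : ℝ) * ((T / n) ^ k * (T / n))) := by
              rw [hchoose, hTn]
          _ = (n : ℝ) * (((k : ℝ) + 1) * ((n.choose (k+1) : ℝ) * ((T / n) ^ k * (T / n)))) := by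
              ring
    have hpos : (0:ℝ) < (n : ℝ) * ((k : ℝ) + 1) := by positivity
    have := mul_le_mul_of_nonneg_left hgoal (le_of_eq rfl)
    -- cancel
    have hcancel : e (k + 1) ≤ (n.choose (k+1) : ℝ) * (T / n) ^ (k+1) := by
      have h1 : (n : ℝ) * (((k : ℝ) + 1) * e (k + 1))
          = ((n : ℝ) * ((k : ℝ) + 1)) * e (k + 1) := by ring
      have h2 : (n : ℝ) * (((k : ℝ) + 1) * ((n.choose (k+1) : ℝ) * (T / n) ^ (k+1)))
          = ((n : ℝ) * ((k : ℝ) + 1)) * ((n.choose (k+1) : ℝ) * (T / n) ^ (k+1)) := by ring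
      rw [h1, h2] at hgoal
      exact le_of_mul_le_mul_left hgoal hpos
    exact hcancel

lemma card_P {n k : ℕ} (hk : k ≤ n) :
    (univ.filter (fun i : Fin n => (i:ℕ) < k)).card = k := by
  classical
  have : univ.filter (fun i : Fin n => (i:ℕ) < k) = Finset.map (Fin.castLEEmb hk) univ := by
    ext i
    simp only [Finset.mem_filter, Finset.mem_univ, true_and, Finset.mem_map, Fin.castLEEmb_apply]
    constructor
    · intro hi
      exact ⟨⟨(i:ℕ), hi⟩, by ext; simp⟩
    · rintro ⟨j, rfl⟩
      simpa using j.2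
  rw [this, Finset.card_map, Finset.card_univ, Fintype.card_fin]

lemma perm_fiber {n k : ℕ} (hk : k ≤ n) (f : Finset (Fin n) → ℝ) :
    ∑ π : Equiv.Perm (Fin n), f ((univ.filter (fun i : Fin n => (i:ℕ) < k)).image π)
      = ((univ.filter (fun π : Equiv.Perm (Fin n) =>
            (univ.filter (fun i : Fin n => (i:ℕ) < k)).image π
              = univ.filter (fun i : Fin n => (i:ℕ) < k))).card : ℝ)
          * ∑ S ∈ powersetCard k (univ : Finset (Fin n)), f S := by
  classical
  set P : Finset (Fin n) := univ.filter (fun i : Fin n => (i:ℕ) < k) with hP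
  have hPcard : P.card = k := card_P hk
  have hmaps : ∀ π : Equiv.Perm (Fin n), π ∈ (univ : Finset (Equiv.Perm (Fin n))) →
      P.image π ∈ powersetCard k (univ : Finset (Fin n)) := by
    intro π _
    exact mem_powersetCard_univ.mpr (by rw [Finset.card_image_of_injective _ π.injective, hPcard])
  have h1 := Finset.sum_fiberwise_of_maps_to hmaps (fun π => f (P.image π))
  rw [← h1, Finset.mul_sum]
  refine Finset.sum_congr rfl fun S hS => ?_
  have hconst : ∀ π ∈ univ.filter (fun π : Equiv.Perm (Fin n) => P.image π = S),
      f (P.image π) = f S := by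
    intro π hπ
    rw [Finset.mem_filter] at hπ
    rw [hπ.2]
  rw [Finset.sum_congr rfl hconst, Finset.sum_const, nsmul_eq_mul]
  congr 2
  -- fiber cardinalities agree
  have hScard : S.card = k := mem_powersetCard_univ.mp hS
  have hcardeq : Fintype.card {i : Fin n // i ∈ P} = Fintype.card {i : Fin n // i ∈ S} := by
    rw [Fintype.card_coe, Fintype.card_coe, hPcard, hScard]
  set e := Fintype.equivOfCardEq hcardeq with he
  set σ₀ : Equiv.Perm (Fin n) := Equiv.extendSubtype e with hσ₀def
  have hσ₀ : P.image σ₀ = S := by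
    apply Finset.eq_of_subset_of_card_le
    · intro j hj
      rw [Finset.mem_image] at hj
      obtain ⟨i, hi, rfl⟩ := hj
      exact e.extendSubtype_mem i hi
    · rw [Finset.card_image_of_injective _ σ₀.injective, hPcard, hScard]
  have himg : ∀ (τ : Equiv.Perm (Fin n)) (Q : Finset (Fin n)) (σ : Equiv.Perm (Fin n)),
      Q.image ⇑(σ * τ) = (Q.image τ).image σ := by
    intro τ Q σ
    rw [Finset.image_image]
    rfl
  apply Finset.card_bij' (fun π _ => σ₀⁻¹ * π) (fun τ _ => σ₀ * τ)
  · intro π hπ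
    rw [Finset.mem_filter] at hπ ⊢
    refine ⟨Finset.mem_univ _, ?_⟩
    rw [himg, hπ.2, ← hσ₀, ← himg]
    simp
  · intro τ hτ
    rw [Finset.mem_filter] at hτ ⊢
    refine ⟨Finset.mem_univ _, ?_⟩
    rw [himg, hτ.2, hσ₀]
  · intro π _
    group
  · intro τ _
    group

lemma permA {n k : ℕ} (hn : 0 < n) (hk : k ≤ n) (ε : Fin n → ℝ) (B : ℝ) (hB : 0 < B)
    (hle : ∀ i, |ε i| ≤ B) (u : ℝ) :
    ∑ π : Equiv.Perm (Fin n),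
        Real.exp (u * ∑ i ∈ univ.filter (fun i : Fin n => (i:ℕ) < k), ε (π i))
      ≤ (n.factorial : ℝ) *
          Real.exp (k * (u * ((∑ i, ε i) / n) + B ^ 2 * u ^ 2)) := by
  classical
  set P : Finset (Fin n) := univ.filter (fun i : Fin n => (i:ℕ) < k) with hP
  set x : Fin n → ℝ := fun i => Real.exp (u * ε i) with hx
  have hx0 : ∀ i, 0 ≤ x i := fun i => (Real.exp_pos _).le
  set c : ℕ := (univ.filter (fun π : Equiv.Perm (Fin n) => P.image π = P)).card with hc
  -- rewrite each exponential as a product over the image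
  have hrw : ∀ π : Equiv.Perm (Fin n),
      Real.exp (u * ∑ i ∈ P, ε (π i)) = ∏ j ∈ P.image π, x j := by
    intro π
    rw [Finset.mul_sum, Real.exp_sum,
      Finset.prod_image (fun a _ b _ h => π.injective h)]
  have h1 : ∑ π : Equiv.Perm (Fin n), Real.exp (u * ∑ i ∈ P, ε (π i))
      = (c : ℝ) * ∑ S ∈ powersetCard k (univ : Finset (Fin n)), ∏ j ∈ S, x j := by
    rw [Finset.sum_congr rfl fun π _ => hrw π]
    exact perm_fiber hk (fun S => ∏ j ∈ S, x j)
  -- counting: n! = c * choose n k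
  have h2 : (n.factorial : ℝ) = (c : ℝ) * (n.choose k : ℝ) := by
    have := perm_fiber (n := n) hk (fun _ => (1:ℝ))
    simpa [Finset.card_univ, Fintype.card_perm, Fintype.card_fin, Finset.card_powersetCard]
      using this
  have hT : (∑ i, x i) / n ≤ Real.exp (u * ((∑ i, ε i) / n) + B ^ 2 * u ^ 2) := by
    rw [div_le_iff₀ (by exact_mod_cast hn : (0:ℝ) < n)]
    rw [mul_comm]
    exact sum_exp_le n hn ε B hB hle u
  have hTn0 : 0 ≤ (∑ i, x i) / n := by positivity
  have h3 : ∑ S ∈ powersetCard k (univ : Finset (Fin n)), ∏ j ∈ S, x j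
      ≤ (n.choose k : ℝ) * Real.exp (k * (u * ((∑ i, ε i) / n) + B ^ 2 * u ^ 2)) := by
    calc ∑ S ∈ powersetCard k (univ : Finset (Fin n)), ∏ j ∈ S, x j
        ≤ (n.choose k : ℝ) * ((∑ i, x i) / n) ^ k := maclaurin hn x hx0 k hk
    _ ≤ (n.choose k : ℝ) * Real.exp (u * ((∑ i, ε i) / n) + B ^ 2 * u ^ 2) ^ k := by
        apply mul_le_mul_of_nonneg_left _ (by positivity)
        exact pow_le_pow_left₀ hTn0 hT k
    _ = (n.choose k : ℝ) * Real.exp (k * (u * ((∑ i, ε i) / n) + B ^ 2 * u ^ 2)) := by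
        rw [← Real.exp_nat_mul]
  rw [h1, h2]
  calc (c:ℝ) * ∑ S ∈ powersetCard k (univ : Finset (Fin n)), ∏ j ∈ S, x j
      ≤ (c:ℝ) * ((n.choose k : ℝ) * Real.exp (k * (u * ((∑ i, ε i) / n) + B ^ 2 * u ^ 2))) :=
        mul_le_mul_of_nonneg_left h3 (by positivity)
  _ = (c:ℝ) * (n.choose k : ℝ) * Real.exp (k * (u * ((∑ i, ε i) / n) + B ^ 2 * u ^ 2)) := by
        ring

/-- For `ε₁,...,εₙ` in a finite set `𝒜` with `B = max_{a ∈ 𝒜}|a|`, a uniform random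
permutation `π`, `Sₙ = Σᵢ εᵢ` and `S_k = Σ_{i ≤ k} ε_{π(i)}`: for `1 ≤ k ≤ 2n/3` and
`0 < α < 1/(4B²)`,
`E[exp(α S_k²/k)] ≤ (1 − 4αB²)^{-1/2} exp(α k Sₙ²/((1 − 4αB²) n²))`. -/
theorem Sk_square_mgf_bound (n : ℕ) (hn : 0 < n) (𝒜 : Finset ℝ) (h𝒜 : 𝒜.Nonempty)
    (ε : Fin n → ℝ) (hε : ∀ i, ε i ∈ 𝒜) (B : ℝ) (hB : B = 𝒜.sup' h𝒜 fun a => |a|)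
    (k : ℕ) (hk1 : 1 ≤ k) (hk : 3 * k ≤ 2 * n)
    (α : ℝ) (hα0 : 0 < α) (hα : α < 1 / (4 * B ^ 2)) :
    (∑ π : Equiv.Perm (Fin n), Real.exp (α *
        (∑ i ∈ Finset.univ.filter (fun i : Fin n => (i : ℕ) < k), ε (π i)) ^ 2 / k))
        / (Nat.factorial n : ℝ)
      ≤ (Real.sqrt (1 - 4 * α * B ^ 2))⁻¹
          * Real.exp (α * k * (∑ i, ε i) ^ 2 / ((1 - 4 * α * B ^ 2) * n ^ 2)) := by
  classical
  have hle : ∀ i, |ε i| ≤ B := fun i => hB ▸ Finset.le_sup' (fun a => |a|) (hε i)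
  have hB0 : 0 < B := by
    rcases lt_or_eq_of_le ((abs_nonneg (ε ⟨0, hn⟩)).trans (hle ⟨0, hn⟩)) with h | h
    · exact h
    · exfalso
      rw [← h] at hα
      norm_num at hα
      linarith
  have hkn : k ≤ n := by omega
  have hkR : (0:ℝ) < k := by exact_mod_cast hk1
  have hnR : (0:ℝ) < n := by exact_mod_cast hn
  have hd : 0 < 1 - 4 * α * B ^ 2 := by
    rw [lt_div_iff₀ (by positivity)] at hα
    linarith
  have hfac : (0:ℝ) < (n.factorial : ℝ) := by exact_mod_cast n.factorial_pos
  set P : Finset (Fin n) := Finset.univ.filter (fun i : Fin n => (i:ℕ) < k) with hP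
  set S : Equiv.Perm (Fin n) → ℝ := fun σp => ∑ i ∈ P, ε (σp i) with hS
  set t : ℝ := Real.sqrt (2 * α / k) with ht
  have ht2 : t ^ 2 = 2 * α / k := Real.sq_sqrt (by positivity)
  set μ : ℝ := (∑ i, ε i) / n with hμ
  set b' : ℝ := (1 - 4 * α * B ^ 2) / 2 with hb'
  have hb'0 : 0 < b' := by rw [hb']; linarith
  set c' : ℝ := t * k * μ with hc'
  have hsqrt2pi : (0:ℝ) < Real.sqrt (2 * Real.pi) :=
    Real.sqrt_pos.mpr (by positivity)
  -- step 1 : pointwise identity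
  have step1 : ∀ π : Equiv.Perm (Fin n), Real.exp (α * (S π) ^ 2 / k)
      = (Real.sqrt (2 * Real.pi))⁻¹ *
          ∫ z : ℝ, Real.exp (-(1/2) * z ^ 2 + (t * S π) * z) := by
    intro π
    rw [gauss_integral one_half_pos (t * S π)]
    have h1 : (t * S π) ^ 2 / (4 * (1/2)) = α * (S π) ^ 2 / k := by
      rw [mul_pow, ht2]
      field_simp
      ring
    have h2 : Real.sqrt (Real.pi / (1/2)) = Real.sqrt (2 * Real.pi) := by
      norm_num [mul_comm]
    rw [h1, h2, ← mul_assoc, inv_mul_cancel₀ (ne_of_gt hsqrt2pi), one_mul]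
  -- step 2 : swap sum and integral
  have step2 : ∑ π : Equiv.Perm (Fin n), Real.exp (α * (S π) ^ 2 / k)
      = (Real.sqrt (2 * Real.pi))⁻¹ *
          ∫ z : ℝ, ∑ π : Equiv.Perm (Fin n), Real.exp (-(1/2) * z ^ 2 + (t * S π) * z) := by
    rw [Finset.sum_congr rfl fun π _ => step1 π, ← Finset.mul_sum]
    congr 1
    rw [← integral_finset_sum]
    intro π _
    exact gauss_integrable one_half_pos (t * S π)
  -- step 3 : pointwise bound on the integrand
  have step3 : ∀ z : ℝ, ∑ π : Equiv.Perm (Fin n), Real.exp (-(1/2) * z ^ 2 + (t * S π) * z)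
      ≤ (n.factorial : ℝ) * Real.exp (-b' * z ^ 2 + c' * z) := by
    intro z
    have hsplit : ∀ π : Equiv.Perm (Fin n),
        Real.exp (-(1/2) * z ^ 2 + (t * S π) * z)
          = Real.exp ((t * z) * S π) * Real.exp (-(1/2) * z ^ 2) := by
      intro π
      rw [← Real.exp_add]
      congr 1
      ring
    rw [Finset.sum_congr rfl fun π _ => hsplit π, ← Finset.sum_mul]
    have hA := permA hn hkn ε B hB0 hle (t * z)
    have hmul := mul_le_mul_of_nonneg_right hA (Real.exp_pos (-(1/2) * z ^ 2)).le
    refine le_trans (le_of_eq ?_) (hmul.trans_eq ?_)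
    · rfl
    · rw [mul_assoc, ← Real.exp_add]
      congr 2
      rw [mul_pow, ht2, hb', hc', hμ]
      field_simp
      ring
  -- step 4 : integrate the bound
  have int_lhs : Integrable (fun z : ℝ =>
      ∑ π : Equiv.Perm (Fin n), Real.exp (-(1/2) * z ^ 2 + (t * S π) * z)) := by
    apply integrable_finset_sum
    intro π _
    exact gauss_integrable one_half_pos (t * S π)
  have int_rhs : Integrable (fun z : ℝ =>
      (n.factorial : ℝ) * Real.exp (-b' * z ^ 2 + c' * z)) :=
    (gauss_integrable hb'0 c').const_mul _
  have step4 : (∫ z : ℝ, ∑ π : Equiv.Perm (Fin n), Real.exp (-(1/2) * z ^ 2 + (t * S π) * z))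
      ≤ ∫ z : ℝ, (n.factorial : ℝ) * Real.exp (-b' * z ^ 2 + c' * z) :=
    integral_mono int_lhs int_rhs step3
  have step5 : ∫ z : ℝ, (n.factorial : ℝ) * Real.exp (-b' * z ^ 2 + c' * z)
      = (n.factorial : ℝ) * (Real.sqrt (Real.pi / b') * Real.exp (c' ^ 2 / (4 * b'))) := by
    rw [MeasureTheory.integral_const_mul, gauss_integral hb'0 c']
  -- final arithmetic
  have hsq : (Real.sqrt (2 * Real.pi))⁻¹ * Real.sqrt (Real.pi / b')
      = (Real.sqrt (1 - 4 * α * B ^ 2))⁻¹ := by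
    have h1 : Real.pi / b' = (2 * Real.pi) / (1 - 4 * α * B ^ 2) := by
      rw [hb']
      field_simp
    rw [h1, Real.sqrt_div (by positivity) _]
    field_simp
  have hexp : c' ^ 2 / (4 * b') = α * k * (∑ i, ε i) ^ 2 / ((1 - 4 * α * B ^ 2) * n ^ 2) := by
    rw [hc', hμ, hb', mul_pow, mul_pow, ht2, div_pow]
    field_simp
    ring
  rw [div_le_iff₀ hfac]
  calc ∑ π : Equiv.Perm (Fin n), Real.exp (α * (S π) ^ 2 / k)
      ≤ (Real.sqrt (2 * Real.pi))⁻¹ *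
          ((n.factorial : ℝ) * (Real.sqrt (Real.pi / b') * Real.exp (c' ^ 2 / (4 * b')))) := by
        rw [step2]
        apply mul_le_mul_of_nonneg_left _ (by positivity)
        exact step4.trans_eq step5
  _ = ((Real.sqrt (2 * Real.pi))⁻¹ * Real.sqrt (Real.pi / b')) *
        Real.exp (c' ^ 2 / (4 * b')) * (n.factorial : ℝ) := by ring
  _ = (Real.sqrt (1 - 4 * α * B ^ 2))⁻¹ *
        Real.exp (α * k * (∑ i, ε i) ^ 2 / ((1 - 4 * α * B ^ 2) * n ^ 2)) * (n.factorial : ℝ) := by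
      rw [hsq, hexp]
end

section
/- If U is uniformly distributed on [−a,a] for some a > 0, then E[U f(U)] = (1/2) E[(a² − U²) f'(U)] for all Lipschitz f and a.e. derivative f'. -/
open MeasureTheory Filter Topology intervalIntegral ProbabilityTheory Real

section FTC
lemma seq_tendsto_nhdsNE (t : ℝ) :
    Tendsto (fun n : ℕ => t + 1 / (n + 1)) atTop (𝓝[≠] t) := by
  apply tendsto_nhdsWithin_of_tendsto_nhds_of_eventually_within
  · have := tendsto_one_div_add_atTop_nhds_zero_nat (𝕜 := ℝ)
    simpa using (tendsto_const_nhds (x := t)).add this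
  · filter_upwards with n
    have : (0:ℝ) < 1 / (n + 1) := by positivity
    simp only [Set.mem_compl_iff, Set.mem_singleton_iff]
    linarith

lemma slope_tendsto {g g' : ℝ → ℝ} {t : ℝ} (ht : HasDerivAt g (g' t) t) :
    Tendsto (fun n : ℕ => (g (t + 1 / (n + 1)) - g t) / (1 / (n + 1))) atTop (𝓝 (g' t)) := by
  have hs := (hasDerivAt_iff_tendsto_slope.mp ht).comp (seq_tendsto_nhdsNE t)
  convert hs using 2 with n
  simp [slope_def_field, Function.comp]

lemma ftc_ae {g g' : ℝ → ℝ} (hg : Continuous g)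
    {x y : ℝ} (hxy : x ≤ y) {C : ℝ}
    (hC : ∀ t ∈ Set.Icc x y, ∀ h : ℝ, 0 < h → h ≤ 1 → |g (t + h) - g t| ≤ C * h)
    (hderiv : ∀ᵐ t ∂(volume : Measure ℝ), HasDerivAt g (g' t) t) :
    ∫ t in x..y, g' t = g y - g x := by
  set e : ℕ → ℝ := fun n => 1 / (n + 1) with he
  have hepos : ∀ n : ℕ, 0 < e n := fun n => by positivity
  have hele : ∀ n : ℕ, e n ≤ 1 := fun n => by
    rw [he]; rw [div_le_one (by positivity)]; norm_num
  set F : ℕ → ℝ → ℝ := fun n t => (g (t + e n) - g t) / e n with hF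
  have T1 : Tendsto (fun n => ∫ t in x..y, F n t) atTop (𝓝 (∫ t in x..y, g' t)) := by
    apply intervalIntegral.tendsto_integral_filter_of_dominated_convergence
      (fun _ => C)
    · filter_upwards with n
      exact (((hg.comp (continuous_id.add continuous_const)).sub hg).div_const
        (e n)).aestronglyMeasurable.restrict
    · filter_upwards with n
      filter_upwards with t htI
      rw [Set.uIoc_of_le hxy] at htI
      have ht : t ∈ Set.Icc x y := Set.Ioc_subset_Icc_self htI
      have := hC t ht (e n) (hepos n) (hele n)
      rw [hF]
      simp only [Real.norm_eq_abs, abs_div, abs_of_pos (hepos n)]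
      rw [div_le_iff₀ (hepos n)]
      linarith
    · exact intervalIntegrable_const
    · filter_upwards [hderiv] with t ht _
      exact slope_tendsto ht
  set G : ℝ → ℝ := fun z => ∫ s in x..z, g s with hG
  have hGd : ∀ z : ℝ, HasDerivAt G (g z) z := fun z =>
    (hg.integral_hasStrictDerivAt x z).hasDerivAt
  have T3 : ∀ z : ℝ, Tendsto (fun n => (G (z + e n) - G z) / e n) atTop (𝓝 (g z)) :=
    fun z => slope_tendsto (g' := g) (hGd z)
  have T2 : ∀ n, ∫ t in x..y, F n t
      = (G (y + e n) - G y) / e n - (G (x + e n) - G x) / e n := by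
    intro n
    have hint1 : IntervalIntegrable (fun t => g (t + e n)) volume x y :=
      (hg.comp (continuous_id.add continuous_const)).intervalIntegrable x y
    have hint2 : IntervalIntegrable g volume x y := hg.intervalIntegrable x y
    have : ∫ t in x..y, F n t
        = ((∫ t in x..y, g (t + e n)) - ∫ t in x..y, g t) / e n := by
      rw [hF, ← intervalIntegral.integral_sub hint1 hint2, intervalIntegral.integral_div]
    rw [this, intervalIntegral.integral_comp_add_right]
    have h1 : ∫ t in x + e n..y + e n, g t
        = G (y + e n) - G (x + e n) :=
      (intervalIntegral.integral_interval_sub_left (hg.intervalIntegrable _ _)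
        (hg.intervalIntegrable _ _)).symm
    have h2 : (∫ t in x..y, g t) = G y := rfl
    rw [h1, h2]
    have h3 : G x = 0 := intervalIntegral.integral_same
    rw [h3]
    ring
  have T4 : Tendsto (fun n => ∫ t in x..y, F n t) atTop (𝓝 (g y - g x)) := by
    simp only [T2]
    exact (T3 y).sub (T3 x)
  exact tendsto_nhds_unique T1 T4
end FTC

set_option maxHeartbeats 1000000 in
/-- If `U` is uniform on `[−a,a]` with `a > 0`, then
`E[U f(U)] = (1/2) E[(a² − U²) f'(U)]` for all Lipschitz `f` and a.e. derivative `f'`. -/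
theorem uniform_stein_coefficient
    {Ω : Type*} [MeasurableSpace Ω] (μ : Measure Ω) [IsProbabilityMeasure μ]
    (U : Ω → ℝ) (a : ℝ) (ha : 0 < a) (hUm : Measurable U)
    (hU : μ.map U = (ENNReal.ofReal (2 * a))⁻¹ • volume.restrict (Set.Icc (-a) a)) :
    ∀ (f f' : ℝ → ℝ), (∃ K, LipschitzWith K f) →
      (∀ᵐ x ∂(volume : Measure ℝ), HasDerivAt f (f' x) x) →
      Integrable (fun ω => U ω * f (U ω)) μ →
      Integrable (fun ω => (a ^ 2 - U ω ^ 2) * f' (U ω)) μ →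
      ∫ ω, U ω * f (U ω) ∂μ = (1 / 2) * ∫ ω, (a ^ 2 - U ω ^ 2) * f' (U ω) ∂μ := by
  rintro f f' ⟨K, hK⟩ hderiv _ _
  have hfc : Continuous f := hK.continuous
  -- a.e. bound on f'
  have hf'K : ∀ᵐ t ∂(volume : Measure ℝ), |f' t| ≤ K := by
    filter_upwards [hderiv] with t ht
    have hs := hasDerivAt_iff_tendsto_slope.mp ht
    refine le_of_tendsto ((continuous_abs.tendsto _).comp hs)
      (eventually_nhdsWithin_of_forall fun y hy => ?_)
    have hne : y - t ≠ 0 := sub_ne_zero.mpr hy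
    have hd := hK.dist_le_mul y t
    rw [Real.dist_eq, Real.dist_eq] at hd
    simp only [Function.comp_apply, slope_def_field, div_eq_mul_inv]
    rw [← div_eq_mul_inv, abs_div, div_le_iff₀ (abs_pos.mpr hne)]
    exact hd
  -- measurability of f'
  have hf'm : AEStronglyMeasurable f' (volume : Measure ℝ) := by
    have : f' =ᵐ[volume] deriv f := by
      filter_upwards [hderiv] with t ht
      exact (ht.deriv).symm
    exact ((stronglyMeasurable_deriv f).aestronglyMeasurable).congr this.symm
  -- a.e. derivative of g
  set g : ℝ → ℝ := fun t => (a ^ 2 - t ^ 2) / 2 * f t with hg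
  set g' : ℝ → ℝ := fun t => -t * f t + (a ^ 2 - t ^ 2) / 2 * f' t with hg'
  have hgc : Continuous g :=
    ((continuous_const.sub (continuous_pow 2)).div_const 2).mul hfc
  have hgderiv : ∀ᵐ t ∂(volume : Measure ℝ), HasDerivAt g (g' t) t := by
    filter_upwards [hderiv] with t ht
    have hp : HasDerivAt (fun s : ℝ => (a ^ 2 - s ^ 2) / 2) (-t) t := by
      have := (((hasDerivAt_pow 2 t)).const_sub (a ^ 2)).div_const 2
      refine this.congr_deriv ?_
      push_cast
      ring
    have := hp.mul ht
    exact this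
  -- slope bound for g
  set C : ℝ := (a ^ 2 + (a + 1) ^ 2) / 2 * K + (|f 0| + K * a) * (2 * a + 1) / 2 with hCdef
  have hC : ∀ t ∈ Set.Icc (-a) a, ∀ h : ℝ, 0 < h → h ≤ 1 → |g (t + h) - g t| ≤ C * h := by
    intro t ht h hh0 hh1
    obtain ⟨ht1, ht2⟩ := ht
    have hfd : |f (t + h) - f t| ≤ K * h := by
      have := hK.dist_le_mul (t + h) t
      rw [Real.dist_eq, Real.dist_eq] at this
      simpa [abs_of_pos hh0] using this
    have hft : |f t| ≤ |f 0| + K * a := by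
      have := hK.dist_le_mul t 0
      rw [Real.dist_eq, Real.dist_eq] at this
      simp only [sub_zero] at this
      have h2 : |t| ≤ a := abs_le.mpr ⟨ht1, ht2⟩
      have h3 : |f t| - |f 0| ≤ |f t - f 0| := abs_sub_abs_le_abs_sub _ _
      have hK0 : (0:ℝ) ≤ K := K.coe_nonneg
      nlinarith
    have hp1 : |(a ^ 2 - (t + h) ^ 2) / 2| ≤ (a ^ 2 + (a + 1) ^ 2) / 2 := by
      rw [abs_le]
      constructor <;> nlinarith
    have hp2 : |(a ^ 2 - (t + h) ^ 2) / 2 - (a ^ 2 - t ^ 2) / 2| ≤ (2 * a + 1) * h / 2 := by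
      rw [abs_le]
      constructor <;> nlinarith
    have key : g (t + h) - g t
        = (a ^ 2 - (t + h) ^ 2) / 2 * (f (t + h) - f t)
          + f t * ((a ^ 2 - (t + h) ^ 2) / 2 - (a ^ 2 - t ^ 2) / 2) := by
      simp only [hg]; ring
    rw [key]
    calc |(a ^ 2 - (t + h) ^ 2) / 2 * (f (t + h) - f t)
          + f t * ((a ^ 2 - (t + h) ^ 2) / 2 - (a ^ 2 - t ^ 2) / 2)|
        ≤ |(a ^ 2 - (t + h) ^ 2) / 2| * |f (t + h) - f t|
          + |f t| * |(a ^ 2 - (t + h) ^ 2) / 2 - (a ^ 2 - t ^ 2) / 2| := by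
          refine (abs_add_le _ _).trans ?_
          rw [abs_mul, abs_mul]
      _ ≤ C * h := by
          have hK0 : (0:ℝ) ≤ K := K.coe_nonneg
          have z1 := abs_nonneg ((a ^ 2 - (t + h) ^ 2) / 2)
          have z2 := abs_nonneg (f (t + h) - f t)
          have z3 := abs_nonneg (f t)
          have z4 := abs_nonneg ((a ^ 2 - (t + h) ^ 2) / 2 - (a ^ 2 - t ^ 2) / 2)
          have z5 := abs_nonneg (f 0)
          rw [hCdef]
          nlinarith [mul_le_mul hp1 hfd z2 (by positivity),
            mul_le_mul hft hp2 z4 (by positivity)]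
  have haa : (-a : ℝ) ≤ a := by linarith
  -- FTC conclusion
  have hFTC : ∫ t in (-a)..a, g' t = 0 := by
    rw [ftc_ae hgc haa hC hgderiv]
    norm_num [hg]
  -- integrability of the two pieces on the interval
  have hint1 : IntervalIntegrable (fun t => -t * f t) volume (-a) a :=
    ((continuous_neg.mul hfc)).intervalIntegrable _ _
  have hint2 : IntervalIntegrable (fun t => (a ^ 2 - t ^ 2) / 2 * f' t) volume (-a) a := by
    rw [intervalIntegrable_iff]
    refine Integrable.mono' (g := fun _ => a ^ 2 / 2 * (K : ℝ))
      (integrableOn_const ?_) ?_ ?_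
    · rw [Set.uIoc_of_le haa]
      exact measure_Ioc_lt_top.ne
    · exact (((continuous_const.sub (continuous_pow 2)).div_const
        2).aestronglyMeasurable.mul hf'm).restrict
    · filter_upwards [ae_restrict_mem measurableSet_uIoc, ae_restrict_of_ae hf'K]
        with t htI htK
      rw [Set.uIoc_of_le haa] at htI
      obtain ⟨ht1, ht2⟩ := htI
      rw [Real.norm_eq_abs, abs_mul]
      have h1 : |(a ^ 2 - t ^ 2) / 2| ≤ a ^ 2 / 2 := by
        rw [abs_le]; constructor <;> nlinarith
      have hK0 : (0:ℝ) ≤ K := K.coe_nonneg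
      nlinarith [abs_nonneg (f' t), abs_nonneg ((a ^ 2 - t ^ 2) / 2)]
  -- core interval identity
  have hcore : ∫ t in (-a)..a, t * f t
      = (1 / 2) * ∫ t in (-a)..a, (a ^ 2 - t ^ 2) * f' t := by
    have hsplit : ∫ t in (-a)..a, g' t
        = (∫ t in (-a)..a, -t * f t) + ∫ t in (-a)..a, (a ^ 2 - t ^ 2) / 2 * f' t := by
      simp only [hg']
      exact intervalIntegral.integral_add hint1 hint2
    have h1 : ∫ t in (-a)..a, -t * f t = -∫ t in (-a)..a, t * f t := by
      rw [← intervalIntegral.integral_neg]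
      simp [neg_mul]
    have h2 : ∫ t in (-a)..a, (a ^ 2 - t ^ 2) / 2 * f' t
        = (1 / 2) * ∫ t in (-a)..a, (a ^ 2 - t ^ 2) * f' t := by
      rw [← intervalIntegral.integral_const_mul]
      congr 1
      ext t
      ring
    rw [hsplit, h1, h2] at hFTC
    linarith
  -- transfer to μ
  have hmapmeas : AEMeasurable U μ := hUm.aemeasurable
  have hac : ((ENNReal.ofReal (2 * a))⁻¹ • volume.restrict (Set.Icc (-a) a)) ≪
      (volume : Measure ℝ) :=
    Measure.smul_absolutelyContinuous.trans
      Measure.restrict_le_self.absolutelyContinuous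
  have hm1 : AEStronglyMeasurable (fun x : ℝ => x * f x) (μ.map U) :=
    (continuous_id.mul hfc).aestronglyMeasurable
  have hm2 : AEStronglyMeasurable (fun x : ℝ => (a ^ 2 - x ^ 2) * f' x) (μ.map U) := by
    rw [hU]
    exact (((continuous_const.sub (continuous_pow 2)).aestronglyMeasurable.mul hf'm)).mono_ac hac
  have hL : ∫ ω, U ω * f (U ω) ∂μ = ∫ x, x * f x ∂(μ.map U) :=
    (integral_map hmapmeas hm1).symm
  have hR : ∫ ω, (a ^ 2 - U ω ^ 2) * f' (U ω) ∂μ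
      = ∫ x, (a ^ 2 - x ^ 2) * f' x ∂(μ.map U) :=
    (integral_map hmapmeas hm2).symm
  rw [hL, hR, hU]
  rw [MeasureTheory.integral_smul_measure, MeasureTheory.integral_smul_measure]
  have hco : ((ENNReal.ofReal (2 * a))⁻¹).toReal = (2 * a)⁻¹ := by
    rw [ENNReal.toReal_inv, ENNReal.toReal_ofReal (by linarith)]
  rw [hco]
  have hIcc1 : ∫ x in Set.Icc (-a) a, x * f x = ∫ t in (-a)..a, t * f t := by
    rw [MeasureTheory.integral_Icc_eq_integral_Ioc, intervalIntegral.integral_of_le haa]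
  have hIcc2 : ∫ x in Set.Icc (-a) a, (a ^ 2 - x ^ 2) * f' x
      = ∫ t in (-a)..a, (a ^ 2 - t ^ 2) * f' t := by
    rw [MeasureTheory.integral_Icc_eq_integral_Ioc, intervalIntegral.integral_of_le haa]
  rw [hIcc1, hIcc2, smul_eq_mul, smul_eq_mul, hcore]
  ring
end
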